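/- arXiv:2201.02549 — 7 statements merged into one kernel-verified Lean document; each statement's English description precedes it below -/
import Mathlib

section
/- Let ω be a non-quasianalytic weight function, N ≥ 1, and L ≥ 1 with ω(e·t) ≤ L(1+ω(t)) for all t ≥ 0. Let m, m' ∈ ℕ with m' ≥ L·m, and let k : ℝ^N → ℂ and l : ℝ^N → [0,∞) satisfy |k(x)| ≤ l(x)² for all x ∈ ℝ^N. Then for all smooth f, g : ℝ^N → ℂ, sup_{j ∈ ℕ, x ∈ ℝ^N} |k(x)|·‖D^j(f·g)(x)‖·exp(−m·φ*_ω(j/m)) ≤ e^{mL} · (sup_{j ∈ ℕ, x ∈ ℝ^N} l(x)·‖D^j f(x)‖·exp(−m'·φ*_ω(j/m'))) · (sup_{j ∈ ℕ, x ∈ ℝ^N} l(x)·‖D^j g(x)‖·exp(−m'·φ*_ω(j/m'))), as an inequality in [0,∞]. -/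
open MeasureTheory
open scoped ENNReal

noncomputable section

/-- The Young conjugate `φ*_ω(s) = sup_{t ≥ 0} (s·t − ω(eᵗ))`, valued in `[0,∞]`. -/
def phiStar (ω : ℝ → ℝ) (s : ℝ) : ℝ≥0∞ :=
  ⨆ t : {t : ℝ // 0 ≤ t}, ENNReal.ofReal (s * t.1 - ω (Real.exp t.1))

/-- `exp : [0,∞] → [0,∞]` with the convention `exp(+∞) = +∞`. -/
def expE (a : ℝ≥0∞) : ℝ≥0∞ :=
  if a = ∞ then ∞ else ENNReal.ofReal (Real.exp a.toReal)

/-- `a ↦ exp(−a)` on `[0,∞]` with the convention `exp(−∞) = 0`. -/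
def expNegE (a : ℝ≥0∞) : ℝ≥0∞ :=
  if a = ∞ then 0 else ENNReal.ofReal (Real.exp (-a.toReal))

/-- A non-quasianalytic weight function in the sense of Braun–Meise–Taylor
(Beurling setting, vanishing on `[0,1]`). -/
structure IsNQWeight (ω : ℝ → ℝ) : Prop where
  continuous : ContinuousOn ω (Set.Ici 0)
  monotone : MonotoneOn ω (Set.Ici 0)
  nonneg : ∀ t, 0 ≤ t → 0 ≤ ω t
  zero_on_unit : ∀ t, 0 ≤ t → t ≤ 1 → ω t = 0
  alpha : ∃ K : ℝ, 1 ≤ K ∧ ∀ t, 0 ≤ t → ω (2 * t) ≤ K * (1 + ω t)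
  beta : IntegrableOn (fun t => ω t / (1 + t ^ 2)) (Set.Ici 1)
  gamma : ∃ a : ℝ, ∃ b : ℝ, 0 < b ∧ ∀ t, 0 ≤ t → a + b * Real.log (1 + t) ≤ ω t
  delta : ConvexOn ℝ (Set.Ici 0) (fun t => ω (Real.exp t))

/-- The seminorm `q_{m,n}(f) = sup_{j,x} ‖D^j f(x)‖ exp(n ω(|x|) − m φ*_ω(j/m))`, in `[0,∞]`. -/
def qSem {N : ℕ} (ω : ℝ → ℝ) (m n : ℕ) (f : EuclideanSpace ℝ (Fin N) → ℂ) : ℝ≥0∞ :=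
  ⨆ (j : ℕ) (x : EuclideanSpace ℝ (Fin N)),
    ENNReal.ofReal (‖iteratedFDeriv ℝ j f x‖ * Real.exp (n * ω ‖x‖)) *
      expNegE ((m : ℝ≥0∞) * phiStar ω ((j : ℝ) / (m : ℝ)))

/-- The seminorm `r_{m,n}(f) = sup_{j,x} ‖D^j f(x)‖ exp(−n ω(|x|) − m φ*_ω(j/m))`, in `[0,∞]`. -/
def rSem {N : ℕ} (ω : ℝ → ℝ) (m n : ℕ) (f : EuclideanSpace ℝ (Fin N) → ℂ) : ℝ≥0∞ :=
  ⨆ (j : ℕ) (x : EuclideanSpace ℝ (Fin N)),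
    ENNReal.ofReal (‖iteratedFDeriv ℝ j f x‖ * Real.exp (-(n * ω ‖x‖))) *
      expNegE ((m : ℝ≥0∞) * phiStar ω ((j : ℝ) / (m : ℝ)))

/-- Membership in the Björck space `𝒮_ω(ℝ^N)`. -/
def MemSomega {N : ℕ} (ω : ℝ → ℝ) (f : EuclideanSpace ℝ (Fin N) → ℂ) : Prop :=
  ContDiff ℝ (⊤ : ℕ∞) f ∧ ∀ m n : ℕ, 1 ≤ m → qSem ω m n f ≠ ∞

/-- Membership in the space `𝒪_{M,ω}(ℝ^N)` of slowly increasing functions of Beurling type. -/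
def MemOMomega {N : ℕ} (ω : ℝ → ℝ) (f : EuclideanSpace ℝ (Fin N) → ℂ) : Prop :=
  ContDiff ℝ (⊤ : ℕ∞) f ∧ ∀ m : ℕ, 1 ≤ m → ∃ n : ℕ, ∃ C : ℝ, 0 < C ∧
    ∀ (j : ℕ) (x : EuclideanSpace ℝ (Fin N)),
      (ENNReal.ofReal ‖iteratedFDeriv ℝ j f x‖) ≤
        ENNReal.ofReal (C * Real.exp (n * ω ‖x‖)) *
          expE ((m : ℝ≥0∞) * phiStar ω ((j : ℝ) / (m : ℝ)))

/-- Membership in the space `𝒪_{C,ω}(ℝ^N)` of very slowly increasing functions. -/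
def MemOComega {N : ℕ} (ω : ℝ → ℝ) (f : EuclideanSpace ℝ (Fin N) → ℂ) : Prop :=
  ContDiff ℝ (⊤ : ℕ∞) f ∧ ∃ n : ℕ, ∀ m : ℕ, 1 ≤ m → ∃ C : ℝ, 0 < C ∧
    ∀ (j : ℕ) (x : EuclideanSpace ℝ (Fin N)),
      (ENNReal.ofReal ‖iteratedFDeriv ℝ j f x‖) ≤
        ENNReal.ofReal (C * Real.exp (n * ω ‖x‖)) *
          expE ((m : ℝ≥0∞) * phiStar ω ((j : ℝ) / (m : ℝ)))


instance : Nonempty {t : ℝ // (0:ℝ) ≤ t} := ⟨⟨0, le_rfl⟩⟩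

lemma aux_scale (ω : ℝ → ℝ) {μ : ℕ} (hμ : 1 ≤ μ) (j : ℝ) :
    (μ : ℝ≥0∞) * phiStar ω (j / μ) =
      ⨆ t : {t : ℝ // 0 ≤ t}, ENNReal.ofReal (j * t.1 - μ * ω (Real.exp t.1)) := by
  have hμ0 : (0:ℝ) < μ := by exact_mod_cast hμ
  rw [phiStar, ENNReal.mul_iSup]
  congr 1; ext t
  rw [← ENNReal.ofReal_natCast μ, ← ENNReal.ofReal_mul hμ0.le]
  congr 1
  field_simp

lemma phiStar_mono (ω : ℝ → ℝ) {s₁ s₂ : ℝ} (h : s₁ ≤ s₂) : phiStar ω s₁ ≤ phiStar ω s₂ := by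
  refine iSup_mono fun t => ENNReal.ofReal_le_ofReal ?_
  have := mul_le_mul_of_nonneg_right h t.2
  linarith

lemma phiStar_superadd (ω : ℝ → ℝ) (hω0 : ∀ t, 0 ≤ t → 0 ≤ ω t) {a b : ℝ}
    (ha : 0 ≤ a) (hb : 0 ≤ b) :
    phiStar ω a + phiStar ω b ≤ phiStar ω (a + b) := by
  simp only [phiStar]
  refine ENNReal.iSup_add_iSup_le fun t s => ?_
  have hφt : 0 ≤ ω (Real.exp t.1) := hω0 _ (Real.exp_pos _).le
  have hφs : 0 ≤ ω (Real.exp s.1) := hω0 _ (Real.exp_pos _).le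
  rcases le_or_gt (a * t.1 - ω (Real.exp t.1)) 0 with hX | hX
  · rw [ENNReal.ofReal_eq_zero.mpr hX, zero_add]
    refine le_iSup_of_le s (ENNReal.ofReal_le_ofReal ?_)
    have : a * s.1 ≥ 0 := mul_nonneg ha s.2
    nlinarith
  · rcases le_or_gt (b * s.1 - ω (Real.exp s.1)) 0 with hY | hY
    · rw [ENNReal.ofReal_eq_zero.mpr hY, add_zero]
      refine le_iSup_of_le t (ENNReal.ofReal_le_ofReal ?_)
      have : b * t.1 ≥ 0 := mul_nonneg hb t.2
      nlinarith
    · rcases le_total t.1 s.1 with hts | hst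
      · rw [← ENNReal.ofReal_add hX.le hY.le]
        refine le_iSup_of_le s (ENNReal.ofReal_le_ofReal ?_)
        have := mul_le_mul_of_nonneg_left hts ha
        nlinarith
      · rw [← ENNReal.ofReal_add hX.le hY.le]
        refine le_iSup_of_le t (ENNReal.ofReal_le_ofReal ?_)
        have := mul_le_mul_of_nonneg_left hst hb
        nlinarith

lemma key_ineq (ω : ℝ → ℝ) (hω0 : ∀ t, 0 ≤ t → 0 ≤ ω t) (hω1 : ω 1 = 0)
    {L : ℝ} (hL : 1 ≤ L) (hLω : ∀ t, 0 ≤ t → ω (Real.exp 1 * t) ≤ L * (1 + ω t))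
    {m m' : ℕ} (hm : 1 ≤ m) (hm' : L * m ≤ (m' : ℝ)) (j : ℕ) :
    ENNReal.ofReal (j : ℝ) + (m' : ℝ≥0∞) * phiStar ω ((j : ℝ) / (m' : ℝ)) ≤
      (m : ℝ≥0∞) * phiStar ω ((j : ℝ) / (m : ℝ)) + ENNReal.ofReal ((m : ℝ) * L) := by
  have hm1 : (1:ℝ) ≤ (m:ℝ) := by exact_mod_cast hm
  have hm'1 : 1 ≤ m' := by
    have : (1:ℝ) ≤ (m':ℝ) := by nlinarith
    exact_mod_cast this
  rw [aux_scale ω hm'1, aux_scale ω hm, ENNReal.add_iSup]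
  refine iSup_le fun t => ?_
  have hφt : 0 ≤ ω (Real.exp t.1) := hω0 _ (Real.exp_pos _).le
  have hshift : ω (Real.exp (t.1 + 1)) ≤ L * (1 + ω (Real.exp t.1)) := by
    have h := hLω (Real.exp t.1) (Real.exp_pos _).le
    rwa [← Real.exp_add, add_comm 1 t.1] at h
  have hωe : ω (Real.exp 1) ≤ L := by
    have h := hLω 1 zero_le_one
    simpa [hω1] using h
  have hmL : (m:ℝ) * ω (Real.exp 1) ≤ (m:ℝ) * L :=
    mul_le_mul_of_nonneg_left hωe (by positivity)
  rcases le_or_gt ((j:ℝ) * t.1 - (m':ℝ) * ω (Real.exp t.1)) 0 with hneg | hpos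
  · rw [ENNReal.ofReal_eq_zero.mpr hneg, add_zero]
    calc ENNReal.ofReal (j:ℝ)
        ≤ ENNReal.ofReal (((j:ℝ) * 1 - (m:ℝ) * ω (Real.exp 1)) + (m:ℝ) * L) :=
          ENNReal.ofReal_le_ofReal (by linarith)
      _ ≤ ENNReal.ofReal ((j:ℝ) * 1 - (m:ℝ) * ω (Real.exp 1)) + ENNReal.ofReal ((m:ℝ) * L) :=
          ENNReal.ofReal_add_le
      _ ≤ _ := add_le_add_left (le_iSup (fun u : {t : ℝ // 0 ≤ t} =>
              ENNReal.ofReal ((j:ℝ) * u.1 - (m:ℝ) * ω (Real.exp u.1))) ⟨1, zero_le_one⟩) _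
  · rw [← ENNReal.ofReal_add (Nat.cast_nonneg j) hpos.le]
    have harith : (j:ℝ) + ((j:ℝ) * t.1 - (m':ℝ) * ω (Real.exp t.1)) ≤
        ((j:ℝ) * (t.1 + 1) - (m:ℝ) * ω (Real.exp (t.1 + 1))) + (m:ℝ) * L := by
      have h1 : (m:ℝ) * ω (Real.exp (t.1 + 1)) ≤ (m:ℝ) * (L * (1 + ω (Real.exp t.1))) :=
        mul_le_mul_of_nonneg_left hshift (by positivity)
      have h2 : L * (m:ℝ) * ω (Real.exp t.1) ≤ (m':ℝ) * ω (Real.exp t.1) :=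
        mul_le_mul_of_nonneg_right hm' hφt
      nlinarith
    calc ENNReal.ofReal ((j:ℝ) + ((j:ℝ) * t.1 - (m':ℝ) * ω (Real.exp t.1)))
        ≤ ENNReal.ofReal (((j:ℝ) * (t.1 + 1) - (m:ℝ) * ω (Real.exp (t.1 + 1))) + (m:ℝ) * L) :=
          ENNReal.ofReal_le_ofReal harith
      _ ≤ ENNReal.ofReal ((j:ℝ) * (t.1 + 1) - (m:ℝ) * ω (Real.exp (t.1 + 1))) +
            ENNReal.ofReal ((m:ℝ) * L) := ENNReal.ofReal_add_le
      _ ≤ _ := add_le_add_left (le_iSup (fun u : {t : ℝ // 0 ≤ t} =>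
              ENNReal.ofReal ((j:ℝ) * u.1 - (m:ℝ) * ω (Real.exp u.1))) ⟨t.1 + 1, add_nonneg t.2 zero_le_one⟩) _


/-- `D ω μ i = (μ · φ*_ω(i/μ)).toReal`. -/
def Dval (ω : ℝ → ℝ) (μ i : ℕ) : ℝ :=
  ((μ : ℝ≥0∞) * phiStar ω ((i : ℝ) / (μ : ℝ))).toReal

/-- Key estimate for the multiplication on `𝒪_{M,ω}(ℝ^N)` (proof of Theorem 3.2):
`sup_{j,x} |k(x)|‖D^j(fg)(x)‖ e^{−mφ*(j/m)} ≤ e^{mL} q_{m',l}(f) q_{m',l}(g)`. -/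
theorem stmt1 {N : ℕ} (hN : 1 ≤ N) (ω : ℝ → ℝ) (hω : IsNQWeight ω)
    (L : ℝ) (hL : 1 ≤ L) (hLω : ∀ t, 0 ≤ t → ω (Real.exp 1 * t) ≤ L * (1 + ω t))
    (m m' : ℕ) (hm : 1 ≤ m) (hm' : L * m ≤ (m' : ℝ))
    (k : EuclideanSpace ℝ (Fin N) → ℂ) (l : EuclideanSpace ℝ (Fin N) → ℝ)
    (hl : ∀ x, 0 ≤ l x) (hkl : ∀ x, ‖k x‖ ≤ (l x) ^ 2)
    (f g : EuclideanSpace ℝ (Fin N) → ℂ) (hf : ContDiff ℝ (⊤ : ℕ∞) f) (hg : ContDiff ℝ (⊤ : ℕ∞) g) :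
    (⨆ (j : ℕ) (x : EuclideanSpace ℝ (Fin N)),
        ENNReal.ofReal (‖k x‖ * ‖iteratedFDeriv ℝ j (fun y => f y * g y) x‖) *
          expNegE ((m : ℝ≥0∞) * phiStar ω ((j : ℝ) / (m : ℝ)))) ≤
      ENNReal.ofReal (Real.exp (m * L)) *
        ((⨆ (j : ℕ) (x : EuclideanSpace ℝ (Fin N)),
            ENNReal.ofReal (l x * ‖iteratedFDeriv ℝ j f x‖) *
              expNegE ((m' : ℝ≥0∞) * phiStar ω ((j : ℝ) / (m' : ℝ)))) *
          (⨆ (j : ℕ) (x : EuclideanSpace ℝ (Fin N)),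
            ENNReal.ofReal (l x * ‖iteratedFDeriv ℝ j g x‖) *
              expNegE ((m' : ℝ≥0∞) * phiStar ω ((j : ℝ) / (m' : ℝ))))) := by
  have hm1 : (1:ℝ) ≤ (m:ℝ) := by exact_mod_cast hm
  have hm'1 : 1 ≤ m' := by
    have : (1:ℝ) ≤ (m':ℝ) := by nlinarith
    exact_mod_cast this
  have hm'pos : (0:ℝ) < (m':ℝ) := by exact_mod_cast hm'1
  set Sf := ⨆ (j : ℕ) (x : EuclideanSpace ℝ (Fin N)),
      ENNReal.ofReal (l x * ‖iteratedFDeriv ℝ j f x‖) *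
        expNegE ((m' : ℝ≥0∞) * phiStar ω ((j : ℝ) / (m' : ℝ))) with hSfdef
  set Sg := ⨆ (j : ℕ) (x : EuclideanSpace ℝ (Fin N)),
      ENNReal.ofReal (l x * ‖iteratedFDeriv ℝ j g x‖) *
        expNegE ((m' : ℝ≥0∞) * phiStar ω ((j : ℝ) / (m' : ℝ))) with hSgdef
  refine iSup_le fun j => iSup_le fun x => ?_
  by_cases hQ : (m : ℝ≥0∞) * phiStar ω ((j : ℝ) / (m : ℝ)) = ∞
  · rw [expNegE, if_pos hQ, mul_zero]
    exact zero_le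
  · -- finiteness setup
    have hkey := key_ineq ω hω.nonneg (hω.zero_on_unit 1 zero_le_one le_rfl) hL hLω hm hm' j
    have hDj : (m' : ℝ≥0∞) * phiStar ω ((j : ℝ) / (m' : ℝ)) ≠ ∞ := by
      intro h
      apply hQ
      rw [h] at hkey
      simp only [add_top, top_le_iff] at hkey
      rcases (ENNReal.add_eq_top.mp hkey) with h1 | h1
      · exact h1
      · exact absurd h1 ENNReal.ofReal_ne_top
    have hd_fin : ∀ i, i ≤ j → (m' : ℝ≥0∞) * phiStar ω ((i : ℝ) / (m' : ℝ)) ≠ ∞ := by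
      intro i hij
      refine ne_top_of_le_ne_top hDj (mul_le_mul_right (phiStar_mono ω ?_) _)
      exact (div_le_div_iff_of_pos_right hm'pos).mpr (by exact_mod_cast hij)
      -- fallback handled below
    have hFnn : ∀ i : ℕ, 0 ≤ l x * ‖iteratedFDeriv ℝ i f x‖ := fun i =>
      mul_nonneg (hl x) (norm_nonneg _)
    have hGnn : ∀ i : ℕ, 0 ≤ l x * ‖iteratedFDeriv ℝ i g x‖ := fun i =>
      mul_nonneg (hl x) (norm_nonneg _)
    have hEm : expNegE ((m : ℝ≥0∞) * phiStar ω ((j : ℝ) / (m : ℝ)))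
        = ENNReal.ofReal (Real.exp (-(Dval ω m j))) := by
      rw [expNegE, if_neg hQ]; rfl
    have hEm' : ∀ i, i ≤ j → expNegE ((m' : ℝ≥0∞) * phiStar ω ((i : ℝ) / (m' : ℝ)))
        = ENNReal.ofReal (Real.exp (-(Dval ω m' i))) := by
      intro i hij; rw [expNegE, if_neg (hd_fin i hij)]; rfl
    have hF : ∀ i, i ≤ j → ENNReal.ofReal (l x * ‖iteratedFDeriv ℝ i f x‖) ≤
        Sf * ENNReal.ofReal (Real.exp (Dval ω m' i)) := by
      intro i hij
      have h1 : ENNReal.ofReal (l x * ‖iteratedFDeriv ℝ i f x‖) *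
          expNegE ((m' : ℝ≥0∞) * phiStar ω ((i : ℝ) / (m' : ℝ))) ≤ Sf := by
        rw [hSfdef]
        exact le_iSup₂ (f := fun (i : ℕ) (y : EuclideanSpace ℝ (Fin N)) =>
          ENNReal.ofReal (l y * ‖iteratedFDeriv ℝ i f y‖) *
            expNegE ((m' : ℝ≥0∞) * phiStar ω ((i : ℝ) / (m' : ℝ)))) i x
      rw [hEm' i hij] at h1
      calc ENNReal.ofReal (l x * ‖iteratedFDeriv ℝ i f x‖)
          = ENNReal.ofReal (l x * ‖iteratedFDeriv ℝ i f x‖) *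
              ENNReal.ofReal (Real.exp (-(Dval ω m' i))) *
              ENNReal.ofReal (Real.exp (Dval ω m' i)) := by
            rw [mul_assoc, ← ENNReal.ofReal_mul (Real.exp_pos _).le, ← Real.exp_add,
              neg_add_cancel, Real.exp_zero, ENNReal.ofReal_one, mul_one]
        _ ≤ Sf * ENNReal.ofReal (Real.exp (Dval ω m' i)) := mul_le_mul_left h1 _
    have hG : ∀ i, i ≤ j → ENNReal.ofReal (l x * ‖iteratedFDeriv ℝ i g x‖) ≤
        Sg * ENNReal.ofReal (Real.exp (Dval ω m' i)) := by
      intro i hij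
      have h1 : ENNReal.ofReal (l x * ‖iteratedFDeriv ℝ i g x‖) *
          expNegE ((m' : ℝ≥0∞) * phiStar ω ((i : ℝ) / (m' : ℝ))) ≤ Sg := by
        rw [hSgdef]
        exact le_iSup₂ (f := fun (i : ℕ) (y : EuclideanSpace ℝ (Fin N)) =>
          ENNReal.ofReal (l y * ‖iteratedFDeriv ℝ i g y‖) *
            expNegE ((m' : ℝ≥0∞) * phiStar ω ((i : ℝ) / (m' : ℝ)))) i x
      rw [hEm' i hij] at h1
      calc ENNReal.ofReal (l x * ‖iteratedFDeriv ℝ i g x‖)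
          = ENNReal.ofReal (l x * ‖iteratedFDeriv ℝ i g x‖) *
              ENNReal.ofReal (Real.exp (-(Dval ω m' i))) *
              ENNReal.ofReal (Real.exp (Dval ω m' i)) := by
            rw [mul_assoc, ← ENNReal.ofReal_mul (Real.exp_pos _).le, ← Real.exp_add,
              neg_add_cancel, Real.exp_zero, ENNReal.ofReal_one, mul_one]
        _ ≤ Sg * ENNReal.ofReal (Real.exp (Dval ω m' i)) := mul_le_mul_left h1 _
    -- the superadditivity estimate on toReal level
    have hdd : ∀ i, i ≤ j → Dval ω m' i + Dval ω m' (j - i) ≤ Dval ω m' j := by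
      intro i hij
      have harg : (i : ℝ) / (m' : ℝ) + ((j - i : ℕ) : ℝ) / (m' : ℝ) = (j : ℝ) / (m' : ℝ) := by
        rw [← add_div, Nat.cast_sub hij]; ring_nf
      have hs := phiStar_superadd ω hω.nonneg
        (a := (i : ℝ) / (m' : ℝ)) (b := ((j - i : ℕ) : ℝ) / (m' : ℝ))
        (by positivity) (by positivity)
      rw [harg] at hs
      have h2 : (m' : ℝ≥0∞) * phiStar ω ((i : ℝ) / (m' : ℝ)) +
          (m' : ℝ≥0∞) * phiStar ω (((j - i : ℕ) : ℝ) / (m' : ℝ)) ≤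
          (m' : ℝ≥0∞) * phiStar ω ((j : ℝ) / (m' : ℝ)) := by
        rw [← mul_add]
        exact mul_le_mul_right hs _
      have h3 := ENNReal.toReal_mono hDj h2
      rwa [ENNReal.toReal_add (hd_fin i hij) (hd_fin (j - i) (Nat.sub_le j i))] at h3
    -- key inequality on toReal level
    have hkey' : (j : ℝ) + Dval ω m' j ≤ Dval ω m j + (m : ℝ) * L := by
      have h1 := ENNReal.toReal_mono
        (ENNReal.add_ne_top.mpr ⟨hQ, ENNReal.ofReal_ne_top⟩) hkey
      rwa [ENNReal.toReal_add ENNReal.ofReal_ne_top hDj,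
        ENNReal.toReal_add hQ ENNReal.ofReal_ne_top,
        ENNReal.toReal_ofReal (Nat.cast_nonneg j),
        ENNReal.toReal_ofReal (by positivity)] at h1
    -- the scalar sum bound
    have hexp2 : (2:ℝ)^j ≤ Real.exp (j : ℝ) := by
      calc (2:ℝ)^j ≤ (Real.exp 1)^j :=
            pow_le_pow_left₀ (by norm_num) (by linarith [Real.add_one_le_exp (1:ℝ)]) j
        _ = Real.exp (j : ℝ) := by rw [← Real.exp_nat_mul, mul_one]
    have hchoose : ∑ i ∈ Finset.range (j+1), ((j.choose i : ℕ) : ℝ) = 2^j := by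
      rw [← Nat.cast_sum, Nat.sum_range_choose]
      push_cast
      ring
    have hsum : ∑ i ∈ Finset.range (j+1),
        (j.choose i : ℝ) * Real.exp (Dval ω m' i + Dval ω m' (j - i) - Dval ω m j) ≤
        Real.exp ((m : ℝ) * L) := by
      calc ∑ i ∈ Finset.range (j+1),
            (j.choose i : ℝ) * Real.exp (Dval ω m' i + Dval ω m' (j - i) - Dval ω m j)
          ≤ ∑ i ∈ Finset.range (j+1),
            (j.choose i : ℝ) * Real.exp (Dval ω m' j - Dval ω m j) := by
            refine Finset.sum_le_sum fun i hi => ?_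
            have hij : i ≤ j := Nat.lt_succ_iff.mp (Finset.mem_range.mp hi)
            exact mul_le_mul_of_nonneg_left
              (Real.exp_le_exp.mpr (by linarith [hdd i hij])) (Nat.cast_nonneg _)
        _ = 2^j * Real.exp (Dval ω m' j - Dval ω m j) := by
            rw [← Finset.sum_mul, hchoose]
        _ ≤ Real.exp (j : ℝ) * Real.exp (Dval ω m' j - Dval ω m j) :=
            mul_le_mul_of_nonneg_right hexp2 (Real.exp_pos _).le
        _ = Real.exp ((j : ℝ) + (Dval ω m' j - Dval ω m j)) := (Real.exp_add _ _).symm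
        _ ≤ Real.exp ((m : ℝ) * L) := Real.exp_le_exp.mpr (by linarith)
    -- per-term estimate
    have hterm : ∀ i ∈ Finset.range (j+1),
        ENNReal.ofReal ((j.choose i : ℝ) * (l x * ‖iteratedFDeriv ℝ i f x‖) *
            (l x * ‖iteratedFDeriv ℝ (j - i) g x‖) * Real.exp (-(Dval ω m j))) ≤
        (Sf * Sg) * ENNReal.ofReal ((j.choose i : ℝ) *
            Real.exp (Dval ω m' i + Dval ω m' (j - i) - Dval ω m j)) := by
      intro i hi
      have hij : i ≤ j := Nat.lt_succ_iff.mp (Finset.mem_range.mp hi)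
      calc ENNReal.ofReal ((j.choose i : ℝ) * (l x * ‖iteratedFDeriv ℝ i f x‖) *
              (l x * ‖iteratedFDeriv ℝ (j - i) g x‖) * Real.exp (-(Dval ω m j)))
          = ENNReal.ofReal (j.choose i : ℝ) *
              ENNReal.ofReal (l x * ‖iteratedFDeriv ℝ i f x‖) *
              ENNReal.ofReal (l x * ‖iteratedFDeriv ℝ (j - i) g x‖) *
              ENNReal.ofReal (Real.exp (-(Dval ω m j))) := by
            rw [ENNReal.ofReal_mul (mul_nonneg (mul_nonneg (Nat.cast_nonneg _) (hFnn i)) (hGnn _)),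
              ENNReal.ofReal_mul (mul_nonneg (Nat.cast_nonneg _) (hFnn i)),
              ENNReal.ofReal_mul (Nat.cast_nonneg _)]
        _ ≤ ENNReal.ofReal (j.choose i : ℝ) *
              (Sf * ENNReal.ofReal (Real.exp (Dval ω m' i))) *
              (Sg * ENNReal.ofReal (Real.exp (Dval ω m' (j - i)))) *
              ENNReal.ofReal (Real.exp (-(Dval ω m j))) := by
            gcongr
            · exact hF i hij
            · exact hG (j - i) (Nat.sub_le j i)
        _ = (Sf * Sg) * (ENNReal.ofReal (j.choose i : ℝ) *
              ENNReal.ofReal (Real.exp (Dval ω m' i)) *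
              ENNReal.ofReal (Real.exp (Dval ω m' (j - i))) *
              ENNReal.ofReal (Real.exp (-(Dval ω m j)))) := by ring
        _ = (Sf * Sg) * ENNReal.ofReal ((j.choose i : ℝ) *
              Real.exp (Dval ω m' i + Dval ω m' (j - i) - Dval ω m j)) := by
            congr 1
            rw [← ENNReal.ofReal_mul (Nat.cast_nonneg _),
              ← ENNReal.ofReal_mul (mul_nonneg (Nat.cast_nonneg _) (Real.exp_pos _).le),
              ← ENNReal.ofReal_mul
                (mul_nonneg (mul_nonneg (Nat.cast_nonneg _) (Real.exp_pos _).le) (Real.exp_pos _).le)]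
            congr 1
            rw [show Dval ω m' i + Dval ω m' (j - i) - Dval ω m j
                = Dval ω m' i + (Dval ω m' (j - i) + -(Dval ω m j)) by ring,
              Real.exp_add, Real.exp_add]
            ring
    -- main chain
    calc ENNReal.ofReal (‖k x‖ * ‖iteratedFDeriv ℝ j (fun y => f y * g y) x‖) *
            expNegE ((m : ℝ≥0∞) * phiStar ω ((j : ℝ) / (m : ℝ)))
        = ENNReal.ofReal (‖k x‖ * ‖iteratedFDeriv ℝ j (fun y => f y * g y) x‖) *
            ENNReal.ofReal (Real.exp (-(Dval ω m j))) := by rw [hEm]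
      _ ≤ ENNReal.ofReal ((∑ i ∈ Finset.range (j+1),
            (j.choose i : ℝ) * (l x * ‖iteratedFDeriv ℝ i f x‖) *
              (l x * ‖iteratedFDeriv ℝ (j - i) g x‖)) * Real.exp (-(Dval ω m j))) := by
          rw [ENNReal.ofReal_mul' (Real.exp_pos _).le]
          refine mul_le_mul_left (ENNReal.ofReal_le_ofReal ?_) _
          calc ‖k x‖ * ‖iteratedFDeriv ℝ j (fun y => f y * g y) x‖
              ≤ (l x)^2 * ∑ i ∈ Finset.range (j+1),
                  (j.choose i : ℝ) * ‖iteratedFDeriv ℝ i f x‖ *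
                    ‖iteratedFDeriv ℝ (j - i) g x‖ :=
                mul_le_mul (hkl x) (norm_iteratedFDeriv_mul_le hf hg x (by exact_mod_cast le_top))
                  (norm_nonneg _) (by positivity)
            _ = ∑ i ∈ Finset.range (j+1),
                  (j.choose i : ℝ) * (l x * ‖iteratedFDeriv ℝ i f x‖) *
                    (l x * ‖iteratedFDeriv ℝ (j - i) g x‖) := by
                rw [Finset.mul_sum]
                exact Finset.sum_congr rfl fun i _ => by ring
      _ = ∑ i ∈ Finset.range (j+1), ENNReal.ofReal ((j.choose i : ℝ) *
            (l x * ‖iteratedFDeriv ℝ i f x‖) * (l x * ‖iteratedFDeriv ℝ (j - i) g x‖) *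
            Real.exp (-(Dval ω m j))) := by
          rw [Finset.sum_mul, ENNReal.ofReal_sum_of_nonneg]
          intro i hi
          exact mul_nonneg (mul_nonneg (mul_nonneg (Nat.cast_nonneg _) (hFnn i)) (hGnn _))
            (Real.exp_pos _).le
      _ ≤ ∑ i ∈ Finset.range (j+1), (Sf * Sg) * ENNReal.ofReal ((j.choose i : ℝ) *
            Real.exp (Dval ω m' i + Dval ω m' (j - i) - Dval ω m j)) :=
          Finset.sum_le_sum hterm
      _ = (Sf * Sg) * ENNReal.ofReal (∑ i ∈ Finset.range (j+1), (j.choose i : ℝ) *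
            Real.exp (Dval ω m' i + Dval ω m' (j - i) - Dval ω m j)) := by
          rw [← Finset.mul_sum, ENNReal.ofReal_sum_of_nonneg fun i _ => by positivity]
      _ ≤ (Sf * Sg) * ENNReal.ofReal (Real.exp ((m : ℝ) * L)) :=
          mul_le_mul_right (ENNReal.ofReal_le_ofReal hsum) _
      _ = ENNReal.ofReal (Real.exp ((m : ℝ) * L)) * (Sf * Sg) := mul_comm _ _

end
end

section
/- Let ω be a non-quasianalytic weight function and N ≥ 1. If f, g ∈ 𝒪_{M,ω}(ℝ^N), then the pointwise product f·g belongs to 𝒪_{M,ω}(ℝ^N); that is, 𝒪_{M,ω}(ℝ^N) is closed under pointwise multiplication. -/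
open MeasureTheory
open scoped ENNReal

noncomputable section

/-- `expE` is monotone. -/
lemma expE_mono {a b : ℝ≥0∞} (h : a ≤ b) : expE a ≤ expE b := by
  unfold expE
  rcases eq_or_ne b ∞ with hb | hb
  · simp [hb]
  · have ha : a ≠ ∞ := fun h' => hb (top_le_iff.mp (h' ▸ h))
    simp only [ha, hb, if_false]
    exact ENNReal.ofReal_le_ofReal (Real.exp_le_exp.mpr (ENNReal.toReal_mono hb h))

/-- `expE` is multiplicative. -/
lemma expE_add (a b : ℝ≥0∞) : expE (a + b) = expE a * expE b := by
  unfold expE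
  rcases eq_or_ne a ∞ with ha | ha
  · rcases eq_or_ne b ∞ with hb | hb
    · simp [ha, hb]
    · rw [ha, top_add, if_pos rfl,
        ENNReal.top_mul (by rw [if_neg hb]; positivity)]
  · rcases eq_or_ne b ∞ with hb | hb
    · rw [hb, add_top, if_pos rfl,
        ENNReal.mul_top (by rw [if_neg ha]; positivity)]
    · rw [if_neg (by simp [ha, hb] : a + b ≠ ∞), if_neg ha, if_neg hb,
        ENNReal.toReal_add ha hb, Real.exp_add,
        ENNReal.ofReal_mul (Real.exp_nonneg _)]

lemma expE_ofReal {r : ℝ} (hr : 0 ≤ r) :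
    expE (ENNReal.ofReal r) = ENNReal.ofReal (Real.exp r) := by
  rw [expE, if_neg ENNReal.ofReal_ne_top, ENNReal.toReal_ofReal hr]

lemma mul_phiStar (ω : ℝ → ℝ) (m j : ℕ) (hm : 1 ≤ m) :
    (m : ℝ≥0∞) * phiStar ω ((j : ℝ) / (m : ℝ)) =
      ⨆ t : {t : ℝ // 0 ≤ t},
        ENNReal.ofReal ((j : ℝ) * t.1 - (m : ℝ) * ω (Real.exp t.1)) := by
  have hm0 : (0:ℝ) < m := by exact_mod_cast hm
  rw [phiStar, ENNReal.mul_iSup]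
  congr 1; funext t
  rw [← ENNReal.ofReal_natCast, ← ENNReal.ofReal_mul (by positivity)]
  congr 1
  field_simp

/-- Superadditivity of the Young conjugate. -/
lemma phiStar_superadd_s2 (ω : ℝ → ℝ) (hnn : ∀ t, 0 ≤ t → 0 ≤ ω t)
    (m i k : ℕ) (hm : 1 ≤ m) :
    (m : ℝ≥0∞) * phiStar ω ((i : ℝ) / m) + (m : ℝ≥0∞) * phiStar ω ((k : ℝ) / m) ≤
      (m : ℝ≥0∞) * phiStar ω (((i + k : ℕ) : ℝ) / m) := by
  rw [mul_phiStar ω m i hm, mul_phiStar ω m k hm, mul_phiStar ω m (i+k) hm]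
  rw [ENNReal.iSup_add]
  refine iSup_le fun t => ?_
  rw [ENNReal.add_iSup]
  refine iSup_le fun u => ?_
  have hωt : 0 ≤ ω (Real.exp t.1) := hnn _ (Real.exp_nonneg _)
  have hωu : 0 ≤ ω (Real.exp u.1) := hnn _ (Real.exp_nonneg _)
  have hik : ((i + k : ℕ) : ℝ) = (i : ℝ) + k := by push_cast; ring
  rcases le_or_gt ((i : ℝ) * t.1 - (m : ℝ) * ω (Real.exp t.1)) 0 with hA | hA
  · rw [ENNReal.ofReal_eq_zero.2 hA, zero_add]
    refine le_iSup_of_le u (ENNReal.ofReal_le_ofReal ?_)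
    rw [hik]
    nlinarith [u.2, (Nat.cast_nonneg i : (0:ℝ) ≤ i)]
  rcases le_or_gt ((k : ℝ) * u.1 - (m : ℝ) * ω (Real.exp u.1)) 0 with hB | hB
  · rw [ENNReal.ofReal_eq_zero.2 hB, add_zero]
    refine le_iSup_of_le t (ENNReal.ofReal_le_ofReal ?_)
    rw [hik]
    nlinarith [t.2, (Nat.cast_nonneg k : (0:ℝ) ≤ k)]
  · rw [← ENNReal.ofReal_add hA.le hB.le]
    rcases le_total t.1 u.1 with h | h
    · refine le_iSup_of_le u (ENNReal.ofReal_le_ofReal ?_)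
      rw [hik]
      nlinarith [(Nat.cast_nonneg i : (0:ℝ) ≤ i)]
    · refine le_iSup_of_le t (ENNReal.ofReal_le_ofReal ?_)
      rw [hik]
      nlinarith [(Nat.cast_nonneg k : (0:ℝ) ≤ k)]

/-- The key scale-change inequality coming from condition `(α)`. -/
lemma keyB (ω : ℝ → ℝ) (hnn : ∀ t, 0 ≤ t → 0 ≤ ω t) (h1 : ω 1 = 0)
    (K : ℝ) (hK : 1 ≤ K) (hα : ∀ t, 0 ≤ t → ω (2 * t) ≤ K * (1 + ω t))
    (m L j : ℕ) (hm : 1 ≤ m) (hL : K ≤ (L : ℝ)) :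
    ENNReal.ofReal ((j : ℝ) * Real.log 2) +
        ((m * L : ℕ) : ℝ≥0∞) * phiStar ω ((j : ℝ) / ((m * L : ℕ) : ℝ)) ≤
      ENNReal.ofReal ((m : ℝ) * L) + (m : ℝ≥0∞) * phiStar ω ((j : ℝ) / (m : ℝ)) := by
  have hL1 : (1 : ℝ) ≤ L := le_trans hK hL
  have hL1' : 1 ≤ L := by exact_mod_cast hL1
  have hm' : 1 ≤ m * L := Nat.one_le_iff_ne_zero.mpr (by positivity)
  have hm0 : (0:ℝ) < m := by exact_mod_cast hm
  have hlog2 : (0:ℝ) ≤ Real.log 2 := Real.log_nonneg one_le_two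
  rw [mul_phiStar ω (m*L) j hm', mul_phiStar ω m j hm]
  rw [ENNReal.add_iSup]
  refine iSup_le fun t => ?_
  have hcast : ((m * L : ℕ) : ℝ) = (m : ℝ) * L := by push_cast; ring
  have hω2 : ω 2 ≤ (L : ℝ) := by
    have := hα 1 zero_le_one
    rw [mul_one, h1] at this
    linarith
  have hωt : 0 ≤ ω (Real.exp t.1) := hnn _ (Real.exp_nonneg _)
  have hαt : ω (Real.exp (t.1 + Real.log 2)) ≤ (L:ℝ) * (1 + ω (Real.exp t.1)) := by
    rw [Real.exp_add, Real.exp_log two_pos, mul_comm (Real.exp t.1) 2]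
    exact le_trans (hα _ (Real.exp_nonneg _))
      (mul_le_mul_of_nonneg_right hL (by linarith))
  rcases le_or_gt ((j : ℝ) * t.1 - ((m*L : ℕ) : ℝ) * ω (Real.exp t.1)) 0 with hA | hA
  · rw [ENNReal.ofReal_eq_zero.2 hA, add_zero]
    refine le_trans (ENNReal.ofReal_le_ofReal
      (show (j:ℝ) * Real.log 2 ≤ (m:ℝ)*L + ((j:ℝ) * Real.log 2 - (m:ℝ) * ω (Real.exp (Real.log 2))) from ?_))
      (le_trans (ENNReal.ofReal_add_le) (add_le_add_right (le_iSup (fun u : {t : ℝ // 0 ≤ t} => ENNReal.ofReal ((j:ℝ) * u.1 - (m:ℝ) * ω (Real.exp u.1))) ⟨Real.log 2, hlog2⟩) _))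
    rw [Real.exp_log two_pos]
    nlinarith
  · rw [← ENNReal.ofReal_add (by positivity) hA.le]
    refine le_trans (ENNReal.ofReal_le_ofReal
      (show (j:ℝ) * Real.log 2 + ((j:ℝ) * t.1 - ((m*L:ℕ):ℝ) * ω (Real.exp t.1)) ≤
        (m:ℝ)*L + ((j:ℝ) * (t.1 + Real.log 2) - (m:ℝ) * ω (Real.exp (t.1 + Real.log 2))) from ?_))
      (le_trans (ENNReal.ofReal_add_le)
        (add_le_add_right (le_iSup (fun u : {t : ℝ // 0 ≤ t} => ENNReal.ofReal ((j:ℝ) * u.1 - (m:ℝ) * ω (Real.exp u.1))) ⟨t.1 + Real.log 2, add_nonneg t.2 hlog2⟩) _))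
    rw [hcast]
    nlinarith

/-- `𝒪_{M,ω}(ℝ^N)` is closed under pointwise multiplication. -/
theorem stmt2 {N : ℕ} (hN : 1 ≤ N) (ω : ℝ → ℝ) (hω : IsNQWeight ω)
    (f g : EuclideanSpace ℝ (Fin N) → ℂ)
    (hf : MemOMomega ω f) (hg : MemOMomega ω g) :
    MemOMomega ω (fun x => f x * g x) := by
  obtain ⟨hfs, hfb⟩ := hf
  obtain ⟨hgs, hgb⟩ := hg
  refine ⟨hfs.mul hgs, ?_⟩
  intro m hm
  obtain ⟨K, hK, hα⟩ := hω.alpha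
  have hnn := hω.nonneg
  have h1 : ω 1 = 0 := hω.zero_on_unit 1 zero_le_one le_rfl
  have hKL : K ≤ (⌈K⌉₊ : ℝ) := Nat.le_ceil K
  have hL1 : (1:ℝ) ≤ (⌈K⌉₊ : ℝ) := le_trans hK hKL
  have hL1' : 1 ≤ ⌈K⌉₊ := by exact_mod_cast hL1
  have hm' : 1 ≤ m * ⌈K⌉₊ := Nat.one_le_iff_ne_zero.mpr (by positivity)
  obtain ⟨n₁, C₁, hC₁, hb₁⟩ := hfb (m * ⌈K⌉₊) hm'
  obtain ⟨n₂, C₂, hC₂, hb₂⟩ := hgb (m * ⌈K⌉₊) hm'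
  refine ⟨n₁ + n₂, C₁ * C₂ * Real.exp ((m:ℝ) * (⌈K⌉₊:ℝ)), by positivity, ?_⟩
  intro j x
  have hleib : ‖iteratedFDeriv ℝ j (fun y => f y * g y) x‖ ≤
      ∑ i ∈ Finset.range (j+1), (j.choose i : ℝ) * ‖iteratedFDeriv ℝ i f x‖ *
        ‖iteratedFDeriv ℝ (j-i) g x‖ :=
    norm_iteratedFDeriv_mul_le hfs hgs x (by exact_mod_cast le_top)
  have hterm : ∀ i ∈ Finset.range (j+1),
      ENNReal.ofReal ((j.choose i : ℝ) * ‖iteratedFDeriv ℝ i f x‖ *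
        ‖iteratedFDeriv ℝ (j-i) g x‖) ≤
      (j.choose i : ℝ≥0∞) * (ENNReal.ofReal (C₁ * Real.exp (n₁ * ω ‖x‖)) *
        ENNReal.ofReal (C₂ * Real.exp (n₂ * ω ‖x‖)) *
        expE (((m * ⌈K⌉₊ : ℕ) : ℝ≥0∞) * phiStar ω ((j : ℝ) / ((m * ⌈K⌉₊ : ℕ) : ℝ)))) := by
    intro i hi
    have hij : i ≤ j := Nat.lt_succ_iff.mp (Finset.mem_range.mp hi)
    have hPQ : ((m * ⌈K⌉₊ : ℕ) : ℝ≥0∞) * phiStar ω ((i : ℝ) / ((m * ⌈K⌉₊ : ℕ) : ℝ)) +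
        ((m * ⌈K⌉₊ : ℕ) : ℝ≥0∞) * phiStar ω (((j - i : ℕ) : ℝ) / ((m * ⌈K⌉₊ : ℕ) : ℝ)) ≤
        ((m * ⌈K⌉₊ : ℕ) : ℝ≥0∞) * phiStar ω ((j : ℝ) / ((m * ⌈K⌉₊ : ℕ) : ℝ)) := by
      have h := phiStar_superadd_s2 ω hnn (m * ⌈K⌉₊) i (j - i) hm'
      rwa [Nat.add_sub_cancel' hij] at h
    calc ENNReal.ofReal ((j.choose i : ℝ) * ‖iteratedFDeriv ℝ i f x‖ *
            ‖iteratedFDeriv ℝ (j-i) g x‖)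
        = (j.choose i : ℝ≥0∞) * ENNReal.ofReal ‖iteratedFDeriv ℝ i f x‖ *
            ENNReal.ofReal ‖iteratedFDeriv ℝ (j-i) g x‖ := by
          rw [ENNReal.ofReal_mul (by positivity), ENNReal.ofReal_mul (by positivity),
            ENNReal.ofReal_natCast]
      _ ≤ (j.choose i : ℝ≥0∞) *
            (ENNReal.ofReal (C₁ * Real.exp (n₁ * ω ‖x‖)) *
              expE (((m * ⌈K⌉₊ : ℕ) : ℝ≥0∞) * phiStar ω ((i : ℝ) / ((m * ⌈K⌉₊ : ℕ) : ℝ)))) *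
            (ENNReal.ofReal (C₂ * Real.exp (n₂ * ω ‖x‖)) *
              expE (((m * ⌈K⌉₊ : ℕ) : ℝ≥0∞) * phiStar ω (((j - i : ℕ) : ℝ) / ((m * ⌈K⌉₊ : ℕ) : ℝ)))) := by
          gcongr
          · exact hb₁ i x
          · exact hb₂ (j - i) x
      _ = (j.choose i : ℝ≥0∞) * (ENNReal.ofReal (C₁ * Real.exp (n₁ * ω ‖x‖)) *
            ENNReal.ofReal (C₂ * Real.exp (n₂ * ω ‖x‖)) *
            (expE (((m * ⌈K⌉₊ : ℕ) : ℝ≥0∞) * phiStar ω ((i : ℝ) / ((m * ⌈K⌉₊ : ℕ) : ℝ))) *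
             expE (((m * ⌈K⌉₊ : ℕ) : ℝ≥0∞) * phiStar ω (((j - i : ℕ) : ℝ) / ((m * ⌈K⌉₊ : ℕ) : ℝ))))) := by
          ring
      _ ≤ (j.choose i : ℝ≥0∞) * (ENNReal.ofReal (C₁ * Real.exp (n₁ * ω ‖x‖)) *
            ENNReal.ofReal (C₂ * Real.exp (n₂ * ω ‖x‖)) *
            expE (((m * ⌈K⌉₊ : ℕ) : ℝ≥0∞) * phiStar ω ((j : ℝ) / ((m * ⌈K⌉₊ : ℕ) : ℝ)))) := by
          gcongr _ * (_ * _ * ?_)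
          rw [← expE_add]
          exact expE_mono hPQ
  have hkey := keyB ω hnn h1 K hK hα m ⌈K⌉₊ j hm hKL
  calc ENNReal.ofReal ‖iteratedFDeriv ℝ j (fun y => f y * g y) x‖
      ≤ ENNReal.ofReal (∑ i ∈ Finset.range (j+1), (j.choose i : ℝ) *
          ‖iteratedFDeriv ℝ i f x‖ * ‖iteratedFDeriv ℝ (j-i) g x‖) :=
        ENNReal.ofReal_le_ofReal hleib
    _ = ∑ i ∈ Finset.range (j+1), ENNReal.ofReal ((j.choose i : ℝ) *
          ‖iteratedFDeriv ℝ i f x‖ * ‖iteratedFDeriv ℝ (j-i) g x‖) :=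
        ENNReal.ofReal_sum_of_nonneg (fun i _ => by positivity)
    _ ≤ ∑ i ∈ Finset.range (j+1), (j.choose i : ℝ≥0∞) *
          (ENNReal.ofReal (C₁ * Real.exp (n₁ * ω ‖x‖)) *
            ENNReal.ofReal (C₂ * Real.exp (n₂ * ω ‖x‖)) *
            expE (((m * ⌈K⌉₊ : ℕ) : ℝ≥0∞) * phiStar ω ((j : ℝ) / ((m * ⌈K⌉₊ : ℕ) : ℝ)))) :=
        Finset.sum_le_sum hterm
    _ = ((2:ℝ≥0∞)^j) * (ENNReal.ofReal (C₁ * Real.exp (n₁ * ω ‖x‖)) *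
          ENNReal.ofReal (C₂ * Real.exp (n₂ * ω ‖x‖)) *
          expE (((m * ⌈K⌉₊ : ℕ) : ℝ≥0∞) * phiStar ω ((j : ℝ) / ((m * ⌈K⌉₊ : ℕ) : ℝ)))) := by
        rw [← Finset.sum_mul, ← Nat.cast_sum, Nat.sum_range_choose]
        norm_cast
    _ = ENNReal.ofReal (C₁ * Real.exp (n₁ * ω ‖x‖)) *
          ENNReal.ofReal (C₂ * Real.exp (n₂ * ω ‖x‖)) *
          expE (ENNReal.ofReal ((j:ℝ) * Real.log 2) +
            ((m * ⌈K⌉₊ : ℕ) : ℝ≥0∞) * phiStar ω ((j : ℝ) / ((m * ⌈K⌉₊ : ℕ) : ℝ))) := by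
        rw [expE_add, expE_ofReal (by positivity)]
        have h2j : ENNReal.ofReal (Real.exp ((j:ℝ) * Real.log 2)) = (2:ℝ≥0∞)^j := by
          rw [show ((j:ℝ) * Real.log 2) = (j:ℕ) * Real.log 2 from rfl, Real.exp_nat_mul,
            Real.exp_log two_pos, ENNReal.ofReal_pow (by norm_num)]
          norm_num
        rw [h2j]
        ring
    _ ≤ ENNReal.ofReal (C₁ * Real.exp (n₁ * ω ‖x‖)) *
          ENNReal.ofReal (C₂ * Real.exp (n₂ * ω ‖x‖)) *
          expE (ENNReal.ofReal ((m:ℝ) * (⌈K⌉₊:ℝ)) +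
            (m : ℝ≥0∞) * phiStar ω ((j : ℝ) / (m : ℝ))) :=
        mul_le_mul_right (expE_mono hkey) _
    _ = ENNReal.ofReal ((C₁ * C₂ * Real.exp ((m:ℝ) * (⌈K⌉₊:ℝ))) *
          Real.exp (((n₁ + n₂ : ℕ):ℝ) * ω ‖x‖)) *
          expE ((m : ℝ≥0∞) * phiStar ω ((j : ℝ) / (m : ℝ))) := by
        rw [expE_add, expE_ofReal (by positivity), ← mul_assoc,
          ← ENNReal.ofReal_mul (by positivity), ← ENNReal.ofReal_mul (by positivity)]
        congr 2
        rw [Nat.cast_add, add_mul, Real.exp_add]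
        ring


end
end

section
/- Let ω be a non-quasianalytic weight function, N ≥ 1, and L ≥ 1 with ω(e·t) ≤ L(1+ω(t)) for all t ≥ 0. Let m, n ∈ ℕ and m' ∈ ℕ with m' ≥ L·m. Then for all smooth f, g : ℝ^N → ℂ, q_{m,2n}(f·g) ≤ e^{mL} · q_{m',n}(f) · q_{m',n}(g), as an inequality in [0,∞], where q_{m,n}(f) := sup_{j ∈ ℕ, x ∈ ℝ^N} ‖D^j f(x)‖·exp(n·ω(|x|) − m·φ*_ω(j/m)). -/
open MeasureTheory
open scoped ENNReal

noncomputable section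

namespace Stmt3Aux

instance : Nonempty {t : ℝ // (0:ℝ) ≤ t} := ⟨⟨0, le_rfl⟩⟩

/-- `PP ω s c = c · φ*_ω(s/c)` in scaled form. -/
def PP (ω : ℝ → ℝ) (s c : ℝ) : ℝ≥0∞ :=
  ⨆ t : {t : ℝ // 0 ≤ t}, ENNReal.ofReal (s * t.1 - c * ω (Real.exp t.1))

lemma le_PP (ω : ℝ → ℝ) (s c : ℝ) (t : {t : ℝ // (0:ℝ) ≤ t}) :
    ENNReal.ofReal (s * t.1 - c * ω (Real.exp t.1)) ≤ PP ω s c :=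
  le_iSup (fun t : {t : ℝ // (0:ℝ) ≤ t} =>
    ENNReal.ofReal (s * t.1 - c * ω (Real.exp t.1))) t

lemma PP_rep (ω : ℝ → ℝ) {c : ℝ} (hc : 0 < c) (s : ℝ) :
    ENNReal.ofReal c * phiStar ω (s / c) = PP ω s c := by
  rw [phiStar, PP, ENNReal.mul_iSup]
  refine iSup_congr fun t => ?_
  rw [← ENNReal.ofReal_mul hc.le]
  congr 1
  field_simp

lemma PP_mono {ω : ℝ → ℝ} (hnn : ∀ t : ℝ, 0 ≤ ω (Real.exp t))
    {s₁ s₂ c₁ c₂ : ℝ} (hs : s₁ ≤ s₂) (hc : c₂ ≤ c₁) :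
    PP ω s₁ c₁ ≤ PP ω s₂ c₂ :=
  iSup_mono fun t => ENNReal.ofReal_le_ofReal (by nlinarith [t.2, hnn t.1])

lemma PP_superadd {ω : ℝ → ℝ} (hnn : ∀ t : ℝ, 0 ≤ ω (Real.exp t))
    {a b c : ℝ} (ha : 0 ≤ a) (hb : 0 ≤ b) (hc : 0 ≤ c) :
    PP ω a c + PP ω b c ≤ PP ω (a + b) c := by
  rw [PP, PP]
  refine ENNReal.iSup_add_iSup_le fun t u => ?_
  rcases le_or_gt (a * t.1 - c * ω (Real.exp t.1)) 0 with hX0 | hX0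
  · rw [ENNReal.ofReal_eq_zero.mpr hX0, zero_add]
    exact le_trans (ENNReal.ofReal_le_ofReal (by nlinarith [u.2])) (le_PP ω (a+b) c u)
  rcases le_or_gt (b * u.1 - c * ω (Real.exp u.1)) 0 with hY0 | hY0
  · rw [ENNReal.ofReal_eq_zero.mpr hY0, add_zero]
    exact le_trans (ENNReal.ofReal_le_ofReal (by nlinarith [t.2])) (le_PP ω (a+b) c t)
  rw [← ENNReal.ofReal_add hX0.le hY0.le]
  rcases le_total t.1 u.1 with htu | htu
  · exact le_trans (ENNReal.ofReal_le_ofReal (by nlinarith [hnn t.1])) (le_PP ω (a+b) c u)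
  · exact le_trans (ENNReal.ofReal_le_ofReal (by nlinarith [hnn u.1])) (le_PP ω (a+b) c t)

lemma PP_shift {ω : ℝ → ℝ}
    {L c j : ℝ} (hc : 0 < c) (hj : 0 ≤ j)
    (hφ1 : ω (Real.exp 1) ≤ L)
    (hφ : ∀ t : ℝ, ω (Real.exp (t + 1)) ≤ L * (1 + ω (Real.exp t))) :
    PP ω j (c * L) + ENNReal.ofReal j ≤ ENNReal.ofReal (c * L) + PP ω j c := by
  rw [PP, ENNReal.iSup_add]
  refine iSup_le fun t => ?_
  rcases le_or_gt (j * t.1 - c * L * ω (Real.exp t.1)) 0 with h0 | h0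
  · rw [ENNReal.ofReal_eq_zero.mpr h0, zero_add]
    calc ENNReal.ofReal j = ENNReal.ofReal (c * L + (j - c * L)) := by ring_nf
      _ ≤ ENNReal.ofReal (c * L) + ENNReal.ofReal (j - c * L) := ENNReal.ofReal_add_le
      _ ≤ ENNReal.ofReal (c * L) + PP ω j c := by
          refine add_le_add_right (le_trans (ENNReal.ofReal_le_ofReal ?_)
            (le_PP ω j c ⟨1, zero_le_one⟩)) _
          show j - c * L ≤ j * 1 - c * ω (Real.exp 1)
          nlinarith
  · calc ENNReal.ofReal (j * t.1 - c * L * ω (Real.exp t.1)) + ENNReal.ofReal j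
        = ENNReal.ofReal (j * t.1 - c * L * ω (Real.exp t.1) + j) :=
          (ENNReal.ofReal_add h0.le hj).symm
      _ ≤ ENNReal.ofReal (c * L + (j * (t.1 + 1) - c * ω (Real.exp (t.1 + 1)))) := by
          refine ENNReal.ofReal_le_ofReal ?_
          nlinarith [hφ t.1]
      _ ≤ ENNReal.ofReal (c * L) + ENNReal.ofReal (j * (t.1 + 1) - c * ω (Real.exp (t.1 + 1))) :=
          ENNReal.ofReal_add_le
      _ ≤ ENNReal.ofReal (c * L) + PP ω j c :=
          add_le_add_right (le_PP ω j c ⟨t.1 + 1, by linarith [t.2]⟩) _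

lemma cast_rep (ω : ℝ → ℝ) {m : ℕ} (hm : 0 < (m:ℝ)) (j : ℕ) :
    (m : ℝ≥0∞) * phiStar ω ((j : ℝ) / (m : ℝ)) = PP ω (j : ℝ) (m : ℝ) := by
  rw [← ENNReal.ofReal_natCast, PP_rep ω hm]

lemma point_le_qSem {N : ℕ} (ω : ℝ → ℝ) (m n : ℕ) (f : EuclideanSpace ℝ (Fin N) → ℂ)
    (j : ℕ) (x : EuclideanSpace ℝ (Fin N)) :
    ENNReal.ofReal (‖iteratedFDeriv ℝ j f x‖ * Real.exp (n * ω ‖x‖)) *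
      expNegE ((m : ℝ≥0∞) * phiStar ω ((j : ℝ) / (m : ℝ))) ≤ qSem ω m n f := by
  rw [qSem]
  exact le_iSup_of_le j (le_iSup (fun x : EuclideanSpace ℝ (Fin N) =>
    ENNReal.ofReal (‖iteratedFDeriv ℝ j f x‖ * Real.exp (n * ω ‖x‖)) *
      expNegE ((m : ℝ≥0∞) * phiStar ω ((j : ℝ) / (m : ℝ)))) x)

lemma ofReal_le_qSem_mul {N : ℕ} (ω : ℝ → ℝ) (m n : ℕ) (hm : 0 < (m:ℝ))
    (f : EuclideanSpace ℝ (Fin N) → ℂ) (j : ℕ) (x : EuclideanSpace ℝ (Fin N))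
    (hfin : PP ω (j : ℝ) (m : ℝ) ≠ ∞) :
    ENNReal.ofReal (‖iteratedFDeriv ℝ j f x‖ * Real.exp (n * ω ‖x‖)) ≤
      qSem ω m n f * ENNReal.ofReal (Real.exp ((PP ω (j : ℝ) (m : ℝ)).toReal)) := by
  have h1 := point_le_qSem ω m n f j x
  rw [cast_rep ω hm j] at h1
  have h2 : expNegE (PP ω (j : ℝ) (m : ℝ)) =
      ENNReal.ofReal (Real.exp (-(PP ω (j : ℝ) (m : ℝ)).toReal)) := by
    rw [expNegE, if_neg hfin]
  set X := ENNReal.ofReal (‖iteratedFDeriv ℝ j f x‖ * Real.exp (n * ω ‖x‖)) with hXdef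
  calc X = X * (ENNReal.ofReal (Real.exp (-(PP ω (j:ℝ) (m:ℝ)).toReal)) *
        ENNReal.ofReal (Real.exp ((PP ω (j:ℝ) (m:ℝ)).toReal))) := by
        rw [← ENNReal.ofReal_mul (Real.exp_nonneg _), ← Real.exp_add]
        simp
    _ = (X * expNegE (PP ω (j:ℝ) (m:ℝ))) * ENNReal.ofReal (Real.exp ((PP ω (j:ℝ) (m:ℝ)).toReal)) := by
        rw [h2, mul_assoc]
    _ ≤ qSem ω m n f * ENNReal.ofReal (Real.exp ((PP ω (j:ℝ) (m:ℝ)).toReal)) :=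
        mul_le_mul_left h1 _

end Stmt3Aux

open Stmt3Aux in
/-- Multiplication estimate for the `q`-seminorms:
`q_{m,2n}(fg) ≤ e^{mL} q_{m',n}(f) q_{m',n}(g)`. -/
theorem stmt3 {N : ℕ} (hN : 1 ≤ N) (ω : ℝ → ℝ) (hω : IsNQWeight ω)
    (L : ℝ) (hL : 1 ≤ L) (hLω : ∀ t, 0 ≤ t → ω (Real.exp 1 * t) ≤ L * (1 + ω t))
    (m n m' : ℕ) (hm : 1 ≤ m) (hn : 1 ≤ n) (hm' : L * m ≤ (m' : ℝ))
    (f g : EuclideanSpace ℝ (Fin N) → ℂ) (hf : ContDiff ℝ (⊤ : ℕ∞) f) (hg : ContDiff ℝ (⊤ : ℕ∞) g) :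
    qSem ω m (2 * n) (fun x => f x * g x) ≤
      ENNReal.ofReal (Real.exp (m * L)) * (qSem ω m' n f * qSem ω m' n g) := by
  classical
  have hφnn : ∀ t : ℝ, 0 ≤ ω (Real.exp t) := fun t => hω.nonneg _ (Real.exp_pos t).le
  have hmR : (0:ℝ) < m := by exact_mod_cast hm
  have hm'R : (0:ℝ) < m' := by nlinarith
  have hφ1 : ω (Real.exp 1) ≤ L := by
    have h := hLω 1 zero_le_one
    rw [mul_one, hω.zero_on_unit 1 zero_le_one le_rfl] at h
    linarith
  have hφstep : ∀ t : ℝ, ω (Real.exp (t + 1)) ≤ L * (1 + ω (Real.exp t)) := by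
    intro t
    rw [add_comm t 1, Real.exp_add]
    exact hLω (Real.exp t) (Real.exp_pos t).le
  rw [qSem]
  refine iSup_le fun j => iSup_le fun x => ?_
  rw [cast_rep ω hmR j]
  by_cases hC : PP ω (j : ℝ) (m : ℝ) = ∞
  · rw [hC]
    simp [expNegE]
  rw [expNegE, if_neg hC]
  set c := (PP ω (j:ℝ) (m:ℝ)).toReal with hcdef
  -- key inequality
  have hPPj : PP ω (j:ℝ) (m':ℝ) + ENNReal.ofReal (j:ℝ) ≤
      ENNReal.ofReal ((m:ℝ) * L) + PP ω (j:ℝ) (m:ℝ) := by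
    have h1 : PP ω (j:ℝ) (m':ℝ) ≤ PP ω (j:ℝ) ((m:ℝ) * L) :=
      PP_mono hφnn le_rfl (by linarith)
    exact le_trans (add_le_add_left h1 _)
      (PP_shift hmR (Nat.cast_nonneg j) hφ1 hφstep)
  have hRfin : ENNReal.ofReal ((m:ℝ) * L) + PP ω (j:ℝ) (m:ℝ) ≠ ∞ :=
    ENNReal.add_ne_top.mpr ⟨ENNReal.ofReal_ne_top, hC⟩
  have hDfin : PP ω (j:ℝ) (m':ℝ) ≠ ∞ :=
    ne_top_of_le_ne_top hRfin (le_trans le_self_add hPPj)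
  set d := (PP ω (j:ℝ) (m':ℝ)).toReal with hddef
  have hdc : d + (j:ℝ) ≤ (m:ℝ) * L + c := by
    have h := ENNReal.toReal_mono hRfin hPPj
    rwa [ENNReal.toReal_add hDfin ENNReal.ofReal_ne_top,
      ENNReal.toReal_add ENNReal.ofReal_ne_top hC,
      ENNReal.toReal_ofReal (Nat.cast_nonneg j),
      ENNReal.toReal_ofReal (by nlinarith : (0:ℝ) ≤ (m:ℝ) * L)] at h
  -- per-k finiteness and bounds
  have hkle : ∀ k ∈ Finset.range (j+1),
      PP ω (k:ℝ) (m':ℝ) + PP ω ((j-k:ℕ):ℝ) (m':ℝ) ≤ PP ω (j:ℝ) (m':ℝ) := by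
    intro k hk
    have hkj : k ≤ j := Nat.lt_succ_iff.mp (Finset.mem_range.mp hk)
    have h := PP_superadd hφnn (Nat.cast_nonneg k) (Nat.cast_nonneg (j-k)) hm'R.le
      (ω := ω)
    rwa [show ((k:ℝ) + ((j-k:ℕ):ℝ)) = (j:ℝ) by rw [Nat.cast_sub hkj]; ring] at h
  have hAfin : ∀ k ∈ Finset.range (j+1), PP ω (k:ℝ) (m':ℝ) ≠ ∞ := fun k hk =>
    ne_top_of_le_ne_top hDfin (le_trans le_self_add (hkle k hk))
  have hBfin : ∀ k ∈ Finset.range (j+1), PP ω ((j-k:ℕ):ℝ) (m':ℝ) ≠ ∞ := fun k hk =>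
    ne_top_of_le_ne_top hDfin (le_trans le_add_self (hkle k hk))
  have habd : ∀ k ∈ Finset.range (j+1),
      (PP ω (k:ℝ) (m':ℝ)).toReal + (PP ω ((j-k:ℕ):ℝ) (m':ℝ)).toReal ≤ d := by
    intro k hk
    have h := ENNReal.toReal_mono hDfin (hkle k hk)
    rwa [ENNReal.toReal_add (hAfin k hk) (hBfin k hk)] at h
  -- set up Leibniz
  set E := Real.exp ((n:ℝ) * ω ‖x‖) with hEdef
  have hEpos : 0 < E := Real.exp_pos _
  have hE2 : Real.exp (((2*n : ℕ):ℝ) * ω ‖x‖) = E * E := by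
    rw [hEdef, ← Real.exp_add]
    congr 1
    push_cast
    ring
  rw [hE2]
  have hleib := norm_iteratedFDeriv_mul_le hf hg x (n := j) (by exact_mod_cast (le_top : (j : ℕ∞) ≤ ⊤))
  set Qf := qSem ω m' n f
  set Qg := qSem ω m' n g
  have hnorm : ∀ k, (0:ℝ) ≤ ‖iteratedFDeriv ℝ k f x‖ := fun k => norm_nonneg _
  calc ENNReal.ofReal (‖iteratedFDeriv ℝ j (fun x => f x * g x) x‖ * (E * E)) *
        ENNReal.ofReal (Real.exp (-c))
      ≤ ENNReal.ofReal ((∑ k ∈ Finset.range (j+1),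
          (j.choose k : ℝ) * ‖iteratedFDeriv ℝ k f x‖ * ‖iteratedFDeriv ℝ (j-k) g x‖) * (E * E)) *
        ENNReal.ofReal (Real.exp (-c)) := by
        refine mul_le_mul_left (ENNReal.ofReal_le_ofReal ?_) _
        exact mul_le_mul_of_nonneg_right hleib (by positivity)
    _ = ∑ k ∈ Finset.range (j+1),
          ENNReal.ofReal ((j.choose k : ℝ) * ‖iteratedFDeriv ℝ k f x‖ *
            ‖iteratedFDeriv ℝ (j-k) g x‖ * (E * E)) * ENNReal.ofReal (Real.exp (-c)) := by
        rw [Finset.sum_mul, ENNReal.ofReal_sum_of_nonneg, Finset.sum_mul]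
        intro k hk
        positivity
    _ ≤ ∑ k ∈ Finset.range (j+1), Qf * Qg *
          ENNReal.ofReal ((j.choose k : ℝ) * Real.exp ((PP ω (k:ℝ) (m':ℝ)).toReal +
            (PP ω ((j-k:ℕ):ℝ) (m':ℝ)).toReal - c)) := by
        refine Finset.sum_le_sum fun k hk => ?_
        have e1 : (j.choose k : ℝ) * ‖iteratedFDeriv ℝ k f x‖ *
            ‖iteratedFDeriv ℝ (j-k) g x‖ * (E * E) =
            (j.choose k : ℝ) * ((‖iteratedFDeriv ℝ k f x‖ * E) *
              (‖iteratedFDeriv ℝ (j-k) g x‖ * E)) := by ring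
        rw [e1, ENNReal.ofReal_mul (by positivity),
          ENNReal.ofReal_mul (by positivity)]
        have hbf := ofReal_le_qSem_mul ω m' n hm'R f k x (hAfin k hk)
        have hbg := ofReal_le_qSem_mul ω m' n hm'R g (j-k) x (hBfin k hk)
        calc ENNReal.ofReal (j.choose k : ℝ) *
              (ENNReal.ofReal (‖iteratedFDeriv ℝ k f x‖ * E) *
               ENNReal.ofReal (‖iteratedFDeriv ℝ (j-k) g x‖ * E)) *
              ENNReal.ofReal (Real.exp (-c))
            ≤ ENNReal.ofReal (j.choose k : ℝ) *
              ((Qf * ENNReal.ofReal (Real.exp ((PP ω (k:ℝ) (m':ℝ)).toReal))) *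
               (Qg * ENNReal.ofReal (Real.exp ((PP ω ((j-k:ℕ):ℝ) (m':ℝ)).toReal)))) *
              ENNReal.ofReal (Real.exp (-c)) := by
              exact mul_le_mul_left (mul_le_mul_right (mul_le_mul' hbf hbg) _) _
          _ = Qf * Qg * (ENNReal.ofReal (j.choose k : ℝ) *
              (ENNReal.ofReal (Real.exp ((PP ω (k:ℝ) (m':ℝ)).toReal)) *
               ENNReal.ofReal (Real.exp ((PP ω ((j-k:ℕ):ℝ) (m':ℝ)).toReal)) *
               ENNReal.ofReal (Real.exp (-c)))) := by ring
          _ = Qf * Qg * ENNReal.ofReal ((j.choose k : ℝ) *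
              Real.exp ((PP ω (k:ℝ) (m':ℝ)).toReal +
                (PP ω ((j-k:ℕ):ℝ) (m':ℝ)).toReal - c)) := by
              rw [← ENNReal.ofReal_mul (Real.exp_nonneg _),
                ← ENNReal.ofReal_mul (by positivity),
                ← ENNReal.ofReal_mul (Nat.cast_nonneg _)]
              congr 1
              rw [← Real.exp_add, ← Real.exp_add]
              ring_nf
    _ = Qf * Qg * ENNReal.ofReal (∑ k ∈ Finset.range (j+1),
          (j.choose k : ℝ) * Real.exp ((PP ω (k:ℝ) (m':ℝ)).toReal +
            (PP ω ((j-k:ℕ):ℝ) (m':ℝ)).toReal - c)) := by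
        rw [← Finset.mul_sum, ENNReal.ofReal_sum_of_nonneg]
        intro k hk
        positivity
    _ ≤ Qf * Qg * ENNReal.ofReal (Real.exp ((m:ℝ) * L)) := by
        refine mul_le_mul_right (ENNReal.ofReal_le_ofReal ?_) _
        calc (∑ k ∈ Finset.range (j+1),
              (j.choose k : ℝ) * Real.exp ((PP ω (k:ℝ) (m':ℝ)).toReal +
                (PP ω ((j-k:ℕ):ℝ) (m':ℝ)).toReal - c))
            ≤ ∑ k ∈ Finset.range (j+1), (j.choose k : ℝ) * Real.exp ((m:ℝ) * L - (j:ℝ)) := by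
              refine Finset.sum_le_sum fun k hk => ?_
              refine mul_le_mul_of_nonneg_left (Real.exp_le_exp.mpr ?_) (Nat.cast_nonneg _)
              have := habd k hk
              linarith
          _ = (2:ℝ)^j * Real.exp ((m:ℝ) * L - (j:ℝ)) := by
              rw [← Finset.sum_mul]
              congr 1
              rw [← Nat.cast_sum, Nat.sum_range_choose]
              push_cast
              ring
          _ ≤ Real.exp ((j:ℝ)) * Real.exp ((m:ℝ) * L - (j:ℝ)) := by
              refine mul_le_mul_of_nonneg_right ?_ (Real.exp_nonneg _)
              calc (2:ℝ)^j ≤ (Real.exp 1)^j := by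
                    refine pow_le_pow_left₀ (by norm_num) ?_ j
                    have := Real.add_one_le_exp (1:ℝ)
                    linarith
                _ = Real.exp (j:ℝ) := by rw [Real.exp_one_pow]
          _ = Real.exp ((m:ℝ) * L) := by
              rw [← Real.exp_add]
              ring_nf
    _ = ENNReal.ofReal (Real.exp ((m:ℝ) * L)) * (Qf * Qg) := by ring

end
end

section
/- Let ω be a non-quasianalytic weight function and N ≥ 1. If f, g ∈ 𝒮_ω(ℝ^N), then the pointwise product f·g belongs to 𝒮_ω(ℝ^N); that is, 𝒮_ω(ℝ^N) is closed under pointwise multiplication. -/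
open MeasureTheory
open scoped ENNReal

noncomputable section

/-! ### Auxiliary machinery for the product theorem -/

/-- Auxiliary supremum `sup_{t ≥ 0} (s t − c ω(eᵗ))` in `[0,∞]`. -/
def supW (ω : ℝ → ℝ) (s c : ℝ) : ℝ≥0∞ :=
  ⨆ t : {t : ℝ // 0 ≤ t}, ENNReal.ofReal (s * t.1 - c * ω (Real.exp t.1))

lemma mul_phiStar_eq (ω : ℝ → ℝ) (m j : ℕ) (hm : 1 ≤ m) :
    (m : ℝ≥0∞) * phiStar ω ((j : ℝ) / (m : ℝ)) = supW ω j m := by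
  have hm0 : (m : ℝ) ≠ 0 := by positivity
  rw [phiStar, ENNReal.mul_iSup, supW]
  congr 1; funext t
  rw [show ((m:ℕ) : ℝ≥0∞) = ENNReal.ofReal (m : ℝ) by simp,
    ← ENNReal.ofReal_mul (by positivity)]
  congr 1
  field_simp

lemma expNegE_add (a b : ℝ≥0∞) : expNegE (a + b) = expNegE a * expNegE b := by
  rcases eq_or_ne a ∞ with ha | ha
  · simp [expNegE, ha]
  rcases eq_or_ne b ∞ with hb | hb
  · simp [expNegE, hb]
  rw [expNegE, expNegE, expNegE, if_neg (by simp [ha, hb, ENNReal.add_eq_top]),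
    if_neg ha, if_neg hb, ENNReal.toReal_add ha hb,
    ← ENNReal.ofReal_mul (by positivity), ← Real.exp_add]
  ring_nf

lemma expNegE_anti {a b : ℝ≥0∞} (h : a ≤ b) : expNegE b ≤ expNegE a := by
  rcases eq_or_ne b ∞ with hb | hb
  · simp [expNegE, hb]
  have ha : a ≠ ∞ := fun h' => hb (top_le_iff.mp (h' ▸ h))
  rw [expNegE, expNegE, if_neg ha, if_neg hb]
  exact ENNReal.ofReal_le_ofReal (Real.exp_le_exp.2 (neg_le_neg
    ((ENNReal.toReal_le_toReal ha hb).2 h)))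

lemma expNegE_ofReal (r : ℝ) (hr : 0 ≤ r) :
    expNegE (ENNReal.ofReal r) = ENNReal.ofReal (Real.exp (-r)) := by
  rw [expNegE, if_neg ENNReal.ofReal_ne_top, ENNReal.toReal_ofReal hr]

lemma supW_superadd (ω : ℝ → ℝ)
    (hnn : ∀ t, 0 ≤ t → 0 ≤ ω t)
    {i k c : ℝ} (hi : 0 ≤ i) (hk : 0 ≤ k) (hc : 0 ≤ c) :
    supW ω i c + supW ω k c ≤ supW ω (i + k) c := by
  rw [supW, supW, supW]
  apply ENNReal.iSup_add_iSup_le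
  rintro ⟨t, ht⟩ ⟨u, hu⟩
  rcases le_or_gt (i * t - c * ω (Real.exp t)) 0 with hA | hA
  · rw [ENNReal.ofReal_eq_zero.2 hA, zero_add]
    refine le_trans (ENNReal.ofReal_le_ofReal ?_) (le_iSup (fun t : {t : ℝ // 0 ≤ t} => ENNReal.ofReal ((i + k) * t.1 - c * ω (Real.exp t.1))) ⟨u, hu⟩)
    have : k * u ≤ (i + k) * u := by nlinarith
    linarith
  rcases le_or_gt (k * u - c * ω (Real.exp u)) 0 with hB | hB
  · rw [ENNReal.ofReal_eq_zero.2 hB, add_zero]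
    refine le_trans (ENNReal.ofReal_le_ofReal ?_) (le_iSup (fun t : {t : ℝ // 0 ≤ t} => ENNReal.ofReal ((i + k) * t.1 - c * ω (Real.exp t.1))) ⟨t, ht⟩)
    have : i * t ≤ (i + k) * t := by nlinarith
    linarith
  · set v := max t u with hv
    have hv0 : 0 ≤ v := le_trans ht (le_max_left _ _)
    rw [← ENNReal.ofReal_add hA.le hB.le]
    refine le_trans (ENNReal.ofReal_le_ofReal ?_) (le_iSup (fun t : {t : ℝ // 0 ≤ t} => ENNReal.ofReal ((i + k) * t.1 - c * ω (Real.exp t.1))) ⟨v, hv0⟩)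
    have hwv : ω (Real.exp t) + ω (Real.exp u) ≥ ω (Real.exp v) := by
      rcases max_cases t u with ⟨h1, _⟩ | ⟨h1, _⟩
      · rw [hv, h1]
        have := hnn (Real.exp u) (Real.exp_nonneg u)
        linarith
      · rw [hv, h1]
        have := hnn (Real.exp t) (Real.exp_nonneg t)
        linarith
    have h1 : i * t ≤ i * v := by nlinarith [le_max_left t u]
    have h2 : k * u ≤ k * v := by nlinarith [le_max_right t u]
    nlinarith

lemma supW_shift (ω : ℝ → ℝ) (hnn : ∀ t, 0 ≤ t → 0 ≤ ω t)
    (hz : ω 1 = 0)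
    {K : ℝ} (hK : 1 ≤ K) (hα : ∀ t, 0 ≤ t → ω (2 * t) ≤ K * (1 + ω t))
    (j m : ℕ) (hm : 1 ≤ m) {M : ℝ} (hMK : (m : ℝ) * K ≤ M) :
    ENNReal.ofReal ((j : ℝ) * Real.log 2) + supW ω j M ≤
      ENNReal.ofReal ((m : ℝ) * K) + supW ω j m := by
  rw [supW, ENNReal.add_iSup]
  apply iSup_le
  rintro ⟨t, ht⟩
  have hω2 : ω 2 ≤ K := by
    have := hα 1 zero_le_one
    rw [mul_one, hz] at this; linarith
  have hl2 : (0:ℝ) ≤ Real.log 2 := Real.log_nonneg one_le_two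
  rcases le_or_gt ((j:ℝ) * t - M * ω (Real.exp t)) 0 with hB | hB
  · rw [ENNReal.ofReal_eq_zero.2 hB, add_zero]
    calc ENNReal.ofReal ((j:ℝ) * Real.log 2)
        ≤ ENNReal.ofReal ((m : ℝ) * K + ((j:ℝ) * Real.log 2 - (m:ℝ) * ω (Real.exp (Real.log 2)))) := by
          apply ENNReal.ofReal_le_ofReal
          rw [Real.exp_log two_pos]
          have hm1 : (1:ℝ) ≤ (m:ℝ) := by exact_mod_cast hm
          nlinarith [hnn 2 (by norm_num : (0:ℝ) ≤ 2)]
      _ ≤ ENNReal.ofReal ((m : ℝ) * K) + ENNReal.ofReal ((j:ℝ) * Real.log 2 - (m:ℝ) * ω (Real.exp (Real.log 2))) :=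
          ENNReal.ofReal_add_le
      _ ≤ _ := by
          gcongr
          exact le_iSup (fun t : {t : ℝ // 0 ≤ t} => ENNReal.ofReal ((j:ℝ) * t.1 - (m:ℝ) * ω (Real.exp t.1))) ⟨Real.log 2, hl2⟩
  · rw [← ENNReal.ofReal_add (by positivity) hB.le]
    calc ENNReal.ofReal ((j:ℝ) * Real.log 2 + ((j:ℝ) * t - M * ω (Real.exp t)))
        ≤ ENNReal.ofReal ((m : ℝ) * K + ((j:ℝ) * (t + Real.log 2) - (m:ℝ) * ω (Real.exp (t + Real.log 2)))) := by
          apply ENNReal.ofReal_le_ofReal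
          rw [Real.exp_add, Real.exp_log two_pos]
          have h2 : ω (Real.exp t * 2) ≤ K * (1 + ω (Real.exp t)) := by
            rw [mul_comm]; exact hα _ (Real.exp_nonneg t)
          have h3 : (m:ℝ) * K * ω (Real.exp t) ≤ M * ω (Real.exp t) := by
            nlinarith [hnn (Real.exp t) (Real.exp_nonneg t)]
          have hm1 : (1:ℝ) ≤ (m:ℝ) := by exact_mod_cast hm
          nlinarith
      _ ≤ ENNReal.ofReal ((m : ℝ) * K) + ENNReal.ofReal ((j:ℝ) * (t + Real.log 2) - (m:ℝ) * ω (Real.exp (t + Real.log 2))) :=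
          ENNReal.ofReal_add_le
      _ ≤ _ := by
          gcongr
          exact le_iSup (fun t : {t : ℝ // 0 ≤ t} => ENNReal.ofReal ((j:ℝ) * t.1 - (m:ℝ) * ω (Real.exp t.1))) ⟨t + Real.log 2, by linarith⟩

lemma key_ineq_s4 (ω : ℝ → ℝ) (hnn : ∀ t, 0 ≤ t → 0 ≤ ω t) (hz : ω 1 = 0)
    {K : ℝ} (hK : 1 ≤ K) (hα : ∀ t, 0 ≤ t → ω (2 * t) ≤ K * (1 + ω t))
    (m M i k : ℕ) (hm : 1 ≤ m) (hM : 1 ≤ M) (hMK : (m : ℝ) * K ≤ (M : ℝ)) :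
    expNegE ((m : ℝ≥0∞) * phiStar ω (((i + k : ℕ) : ℝ) / (m : ℝ))) ≤
      ENNReal.ofReal (Real.exp ((m : ℝ) * K - ((i + k : ℕ) : ℝ) * Real.log 2)) *
        (expNegE ((M : ℝ≥0∞) * phiStar ω ((i : ℝ) / (M : ℝ))) *
          expNegE ((M : ℝ≥0∞) * phiStar ω ((k : ℝ) / (M : ℝ)))) := by
  set j : ℕ := i + k with hj
  rw [mul_phiStar_eq ω m j hm, mul_phiStar_eq ω M i hM, mul_phiStar_eq ω M k hM]
  have hsup : supW ω i M + supW ω k M ≤ supW ω j M := by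
    have := supW_superadd ω hnn (i := (i:ℝ)) (k := (k:ℝ)) (c := (M:ℝ))
      (Nat.cast_nonneg i) (Nat.cast_nonneg k) (Nat.cast_nonneg M)
    rwa [show ((i:ℝ) + (k:ℝ)) = ((j:ℕ):ℝ) by push_cast [hj]; ring] at this
  have hshift := supW_shift ω hnn hz hK hα j m hm hMK
  have hchain : ENNReal.ofReal ((j : ℝ) * Real.log 2) + (supW ω i M + supW ω k M) ≤
      ENNReal.ofReal ((m : ℝ) * K) + supW ω j m := by
    calc ENNReal.ofReal ((j : ℝ) * Real.log 2) + (supW ω i M + supW ω k M)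
        ≤ ENNReal.ofReal ((j : ℝ) * Real.log 2) + supW ω j M := by gcongr
      _ ≤ _ := hshift
  have hmK0 : (0:ℝ) ≤ (m : ℝ) * K := by positivity
  have hjl0 : (0:ℝ) ≤ (j : ℝ) * Real.log 2 := by
    have := Real.log_nonneg (by norm_num : (1:ℝ) ≤ 2); positivity
  have hE := expNegE_anti hchain
  rw [expNegE_add, expNegE_add, expNegE_add, expNegE_ofReal _ hmK0,
    expNegE_ofReal _ hjl0] at hE
  -- hE : exp(-mK) * expNegE (supW j m) ≤ exp(-j log 2) * (expNegE (supW i M) * expNegE (supW k M))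
  calc expNegE (supW ω j m)
      = ENNReal.ofReal (Real.exp ((m:ℝ)*K)) *
          (ENNReal.ofReal (Real.exp (-((m:ℝ)*K))) * expNegE (supW ω j m)) := by
        rw [← mul_assoc, ← ENNReal.ofReal_mul (Real.exp_nonneg _), ← Real.exp_add]
        simp
    _ ≤ ENNReal.ofReal (Real.exp ((m:ℝ)*K)) *
          (ENNReal.ofReal (Real.exp (-((j:ℝ) * Real.log 2))) *
            (expNegE (supW ω i M) * expNegE (supW ω k M))) := by gcongr
    _ = _ := by
        rw [← mul_assoc, ← ENNReal.ofReal_mul (Real.exp_nonneg _), ← Real.exp_add]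
        ring_nf

/-- `𝒮_ω(ℝ^N)` is closed under pointwise multiplication. -/
theorem stmt4 {N : ℕ} (hN : 1 ≤ N) (ω : ℝ → ℝ) (hω : IsNQWeight ω)
    (f g : EuclideanSpace ℝ (Fin N) → ℂ)
    (hf : MemSomega ω f) (hg : MemSomega ω g) :
    MemSomega ω (fun x => f x * g x) := by
  obtain ⟨K, hK1, hα⟩ := hω.alpha
  have hz : ω 1 = 0 := hω.zero_on_unit 1 zero_le_one le_rfl
  have hnn := hω.nonneg
  refine ⟨hf.1.mul hg.1, ?_⟩
  intro m n hm
  set M : ℕ := m * ⌈K⌉₊ with hMdef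
  have hM1 : 1 ≤ M := by
    have h1 : 0 < ⌈K⌉₊ := Nat.ceil_pos.mpr (by linarith)
    have h2 : 0 < m := hm
    rw [hMdef]
    exact Nat.mul_pos h2 h1
  have hMK : (m : ℝ) * K ≤ (M : ℝ) := by
    have h1 : K ≤ (⌈K⌉₊ : ℝ) := Nat.le_ceil K
    have h2 : (0:ℝ) ≤ (m:ℝ) := Nat.cast_nonneg m
    calc (m:ℝ) * K ≤ (m:ℝ) * (⌈K⌉₊ : ℝ) := by nlinarith
      _ = (M : ℝ) := by push_cast [hMdef]; ring
  have hQf : qSem ω M n f ≠ ∞ := hf.2 M n hM1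
  have hQg : qSem ω M 0 g ≠ ∞ := hg.2 M 0 hM1
  apply ne_top_of_le_ne_top
    (ENNReal.mul_ne_top ENNReal.ofReal_ne_top (ENNReal.mul_ne_top hQf hQg))
    (?_ : qSem ω m n (fun x => f x * g x) ≤
      ENNReal.ofReal (Real.exp ((m:ℝ) * K)) * (qSem ω M n f * qSem ω M 0 g))
  rw [qSem]
  apply iSup_le; intro j
  apply iSup_le; intro x
  have hd := norm_iteratedFDeriv_mul_le hf.1 hg.1 x (show ((j:ℕ) : WithTop ℕ∞) ≤ ((⊤ : ℕ∞) : WithTop ℕ∞) by exact_mod_cast le_top)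
  set E : ℝ := Real.exp ((n:ℝ) * ω ‖x‖) with hE
  have hEpos : 0 < E := Real.exp_pos _
  have hterm : ∀ i ∈ Finset.range (j+1),
      ENNReal.ofReal (((j.choose i : ℕ):ℝ) * ‖iteratedFDeriv ℝ i f x‖ *
          ‖iteratedFDeriv ℝ (j - i) g x‖ * E) *
        expNegE ((m : ℝ≥0∞) * phiStar ω ((j : ℝ) / (m : ℝ))) ≤
      ENNReal.ofReal (((j.choose i : ℕ):ℝ) * Real.exp ((m:ℝ)*K - (j:ℝ) * Real.log 2)) *
        (qSem ω M n f * qSem ω M 0 g) := by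
    intro i hi
    have hik : i + (j - i) = j := Nat.add_sub_cancel' (Nat.lt_succ_iff.1 (Finset.mem_range.1 hi))
    have hkey := key_ineq_s4 ω hnn hz hK1 hα m M i (j - i) hm hM1 hMK
    rw [hik] at hkey
    have hfi : ENNReal.ofReal (‖iteratedFDeriv ℝ i f x‖ * E) *
        expNegE ((M : ℝ≥0∞) * phiStar ω ((i : ℝ) / (M : ℝ))) ≤ qSem ω M n f := by
      rw [qSem]
      exact le_iSup₂_of_le i x le_rfl
    have hgk : ENNReal.ofReal (‖iteratedFDeriv ℝ (j - i) g x‖) *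
        expNegE ((M : ℝ≥0∞) * phiStar ω (((j - i : ℕ) : ℝ) / (M : ℝ))) ≤ qSem ω M 0 g := by
      rw [qSem]
      refine le_iSup₂_of_le (j - i) x ?_
      simp
    calc ENNReal.ofReal (((j.choose i : ℕ):ℝ) * ‖iteratedFDeriv ℝ i f x‖ *
            ‖iteratedFDeriv ℝ (j - i) g x‖ * E) *
          expNegE ((m : ℝ≥0∞) * phiStar ω ((j : ℝ) / (m : ℝ)))
        = ENNReal.ofReal ((j.choose i : ℕ):ℝ) *
            (ENNReal.ofReal (‖iteratedFDeriv ℝ i f x‖ * E) *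
              ENNReal.ofReal (‖iteratedFDeriv ℝ (j - i) g x‖)) *
          expNegE ((m : ℝ≥0∞) * phiStar ω ((j : ℝ) / (m : ℝ))) := by
          rw [← ENNReal.ofReal_mul (by positivity), ← ENNReal.ofReal_mul (by positivity)]
          congr 2
          ring
      _ ≤ ENNReal.ofReal ((j.choose i : ℕ):ℝ) *
            (ENNReal.ofReal (‖iteratedFDeriv ℝ i f x‖ * E) *
              ENNReal.ofReal (‖iteratedFDeriv ℝ (j - i) g x‖)) *
          (ENNReal.ofReal (Real.exp ((m:ℝ)*K - (j:ℝ) * Real.log 2)) *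
            (expNegE ((M : ℝ≥0∞) * phiStar ω ((i : ℝ) / (M : ℝ))) *
              expNegE ((M : ℝ≥0∞) * phiStar ω (((j - i : ℕ) : ℝ) / (M : ℝ))))) := by
          gcongr
      _ = (ENNReal.ofReal ((j.choose i : ℕ):ℝ) *
            ENNReal.ofReal (Real.exp ((m:ℝ)*K - (j:ℝ) * Real.log 2))) *
          ((ENNReal.ofReal (‖iteratedFDeriv ℝ i f x‖ * E) *
              expNegE ((M : ℝ≥0∞) * phiStar ω ((i : ℝ) / (M : ℝ)))) *
            (ENNReal.ofReal (‖iteratedFDeriv ℝ (j - i) g x‖) *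
              expNegE ((M : ℝ≥0∞) * phiStar ω (((j - i : ℕ) : ℝ) / (M : ℝ))))) := by
          ring
      _ ≤ (ENNReal.ofReal ((j.choose i : ℕ):ℝ) *
            ENNReal.ofReal (Real.exp ((m:ℝ)*K - (j:ℝ) * Real.log 2))) *
          (qSem ω M n f * qSem ω M 0 g) := by
          gcongr
      _ = ENNReal.ofReal (((j.choose i : ℕ):ℝ) * Real.exp ((m:ℝ)*K - (j:ℝ) * Real.log 2)) *
          (qSem ω M n f * qSem ω M 0 g) := by
          rw [← ENNReal.ofReal_mul (by positivity)]
  calc ENNReal.ofReal (‖iteratedFDeriv ℝ j (fun x => f x * g x) x‖ * E) *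
        expNegE ((m : ℝ≥0∞) * phiStar ω ((j : ℝ) / (m : ℝ)))
      ≤ ENNReal.ofReal ((∑ i ∈ Finset.range (j+1), ((j.choose i : ℕ):ℝ) *
            ‖iteratedFDeriv ℝ i f x‖ * ‖iteratedFDeriv ℝ (j - i) g x‖) * E) *
          expNegE ((m : ℝ≥0∞) * phiStar ω ((j : ℝ) / (m : ℝ))) := by
        gcongr
    _ = (∑ i ∈ Finset.range (j+1), ENNReal.ofReal (((j.choose i : ℕ):ℝ) *
            ‖iteratedFDeriv ℝ i f x‖ * ‖iteratedFDeriv ℝ (j - i) g x‖ * E)) *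
          expNegE ((m : ℝ≥0∞) * phiStar ω ((j : ℝ) / (m : ℝ))) := by
        congr 1
        rw [Finset.sum_mul, ENNReal.ofReal_sum_of_nonneg (fun i _ => by positivity)]
    _ = ∑ i ∈ Finset.range (j+1), ENNReal.ofReal (((j.choose i : ℕ):ℝ) *
            ‖iteratedFDeriv ℝ i f x‖ * ‖iteratedFDeriv ℝ (j - i) g x‖ * E) *
          expNegE ((m : ℝ≥0∞) * phiStar ω ((j : ℝ) / (m : ℝ))) := by
        rw [Finset.sum_mul]
    _ ≤ ∑ i ∈ Finset.range (j+1),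
          ENNReal.ofReal (((j.choose i : ℕ):ℝ) * Real.exp ((m:ℝ)*K - (j:ℝ) * Real.log 2)) *
            (qSem ω M n f * qSem ω M 0 g) :=
        Finset.sum_le_sum hterm
    _ = ENNReal.ofReal (∑ i ∈ Finset.range (j+1),
            ((j.choose i : ℕ):ℝ) * Real.exp ((m:ℝ)*K - (j:ℝ) * Real.log 2)) *
          (qSem ω M n f * qSem ω M 0 g) := by
        rw [← Finset.sum_mul, ← ENNReal.ofReal_sum_of_nonneg (fun i _ => by positivity)]
    _ ≤ ENNReal.ofReal (Real.exp ((m:ℝ) * K)) * (qSem ω M n f * qSem ω M 0 g) := by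
        refine mul_le_mul_left (ENNReal.ofReal_le_ofReal (le_of_eq ?_)) _
        have hsum : (∑ i ∈ Finset.range (j+1), ((j.choose i : ℕ):ℝ)) = (2:ℝ)^j := by
          rw [← Nat.cast_sum, Nat.sum_range_choose]
          push_cast; ring
        have h2j : Real.exp ((j:ℝ) * Real.log 2) = (2:ℝ)^j := by
          rw [Real.exp_nat_mul, Real.exp_log two_pos]
        have h2pos : (0:ℝ) < (2:ℝ)^j := by positivity
        rw [← Finset.sum_mul, hsum, Real.exp_sub, h2j]
        field_simp
end
end

section
/- Let ω be a non-quasianalytic weight function, N ≥ 1, and L ≥ 1 with ω(e·t) ≤ L(1+ω(t)) for all t ≥ 0. Let m, n₁, n₂ ∈ ℕ and m' ∈ ℕ with m' ≥ L·m. Then for all smooth f, g : ℝ^N → ℂ, r_{m,n₁+n₂}(f·g) ≤ e^{mL} · r_{m',n₁}(f) · r_{m',n₂}(g), as an inequality in [0,∞], where r_{m,n}(f) := sup_{j ∈ ℕ, x ∈ ℝ^N} ‖D^j f(x)‖·exp(−n·ω(|x|) − m·φ*_ω(j/m)). -/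
open MeasureTheory
open scoped ENNReal

noncomputable section

namespace Stmt5Aux

variable {ω : ℝ → ℝ}

lemma phiStar_mono {a b : ℝ} (h : a ≤ b) : phiStar ω a ≤ phiStar ω b :=
  iSup_mono fun t => ENNReal.ofReal_le_ofReal
    (by have ht := t.2; nlinarith)

lemma ofReal_le_phiStar (s t : ℝ) (ht : 0 ≤ t) :
    ENNReal.ofReal (s * t - ω (Real.exp t)) ≤ phiStar ω s :=
  le_iSup_of_le ⟨t, ht⟩ le_rfl

lemma le_toReal_phiStar {s v : ℝ} (h : ENNReal.ofReal v ≤ phiStar ω s)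
    (hfin : phiStar ω s ≠ ∞) : v ≤ (phiStar ω s).toReal := by
  rcases le_or_gt v 0 with hv | hv
  · exact hv.trans ENNReal.toReal_nonneg
  · have h2 := ENNReal.toReal_mono hfin h
    rwa [ENNReal.toReal_ofReal hv.le] at h2

lemma phiStar_scale (hphi : ∀ t : ℝ, 0 ≤ t → 0 ≤ ω (Real.exp t))
    {θ s : ℝ} (hθ0 : 0 ≤ θ) (hθ1 : θ ≤ 1) (hs : 0 ≤ s) :
    phiStar ω (θ * s) ≤ ENNReal.ofReal θ * phiStar ω s := by
  rw [phiStar, phiStar, ENNReal.mul_iSup]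
  refine iSup_mono fun t => ?_
  rw [← ENNReal.ofReal_mul hθ0]
  refine ENNReal.ofReal_le_ofReal ?_
  have h1 := hphi t.1 t.2
  have ht := t.2
  nlinarith

lemma phiStar_superadd (hphi : ∀ t : ℝ, 0 ≤ t → 0 ≤ ω (Real.exp t))
    {a b : ℝ} (ha : 0 ≤ a) (hb : 0 ≤ b) :
    phiStar ω a + phiStar ω b ≤ phiStar ω (a + b) := by
  rcases eq_or_lt_of_le (add_nonneg ha hb) with h0 | h0
  · have ha0 : a = 0 := by linarith
    have hb0 : b = 0 := by linarith
    have hP0 : phiStar ω 0 = 0 := by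
      refine le_antisymm (iSup_le fun t => ?_) zero_le
      have h1 := hphi t.1 t.2
      simp only [zero_mul, zero_sub, nonpos_iff_eq_zero]
      exact ENNReal.ofReal_eq_zero.mpr (by linarith)
    simp [ha0, hb0, hP0]
  · have hab : a + b ≠ 0 := ne_of_gt h0
    have h1 : phiStar ω a ≤ ENNReal.ofReal (a / (a + b)) * phiStar ω (a + b) := by
      have := phiStar_scale hphi (div_nonneg ha h0.le)
        (div_le_one_of_le₀ (by linarith) h0.le) (add_nonneg ha hb)
      rwa [div_mul_cancel₀ _ hab] at this
    have h2 : phiStar ω b ≤ ENNReal.ofReal (b / (a + b)) * phiStar ω (a + b) := by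
      have := phiStar_scale hphi (div_nonneg hb h0.le)
        (div_le_one_of_le₀ (by linarith) h0.le) (add_nonneg ha hb)
      rwa [div_mul_cancel₀ _ hab] at this
    calc phiStar ω a + phiStar ω b
        ≤ (ENNReal.ofReal (a / (a + b)) + ENNReal.ofReal (b / (a + b))) * phiStar ω (a + b) := by
          rw [add_mul]; exact add_le_add h1 h2
      _ = phiStar ω (a + b) := by
          rw [← ENNReal.ofReal_add (div_nonneg ha h0.le) (div_nonneg hb h0.le),
            ← add_div, div_self hab, ENNReal.ofReal_one, one_mul]

lemma phiStar_superadd_real (hphi : ∀ t : ℝ, 0 ≤ t → 0 ≤ ω (Real.exp t))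
    {a b : ℝ} (ha : 0 ≤ a) (hb : 0 ≤ b) (hfin : phiStar ω (a + b) ≠ ∞) :
    (phiStar ω a).toReal + (phiStar ω b).toReal ≤ (phiStar ω (a + b)).toReal := by
  have h := phiStar_superadd hphi ha hb
  have hfa : phiStar ω a ≠ ∞ := ne_top_of_le_ne_top hfin (le_self_add.trans h)
  have hfb : phiStar ω b ≠ ∞ := ne_top_of_le_ne_top hfin (le_add_self.trans h)
  have h2 := ENNReal.toReal_mono hfin h
  rwa [ENNReal.toReal_add hfa hfb] at h2

/-- Key shift estimate: `j + m' φ*(j/m') ≤ mL + m φ*(j/m)` when `m' ≥ Lm`. -/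
lemma key_shift (hω : IsNQWeight ω) {L : ℝ} (hL : 1 ≤ L)
    (hLω : ∀ t, 0 ≤ t → ω (Real.exp 1 * t) ≤ L * (1 + ω t))
    {m m' j : ℕ} (hm : 1 ≤ m) (hm' : L * m ≤ (m' : ℝ))
    (hfin : phiStar ω ((j : ℝ) / (m : ℝ)) ≠ ∞) :
    (j : ℝ) + (m' : ℝ) * (phiStar ω ((j : ℝ) / (m' : ℝ))).toReal ≤
      (m : ℝ) * L + (m : ℝ) * (phiStar ω ((j : ℝ) / (m : ℝ))).toReal := by
  have hmpos : (0 : ℝ) < m := by exact_mod_cast hm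
  have hm'pos : (0 : ℝ) < m' := lt_of_lt_of_le (by nlinarith) hm'
  have hωe : ω (Real.exp 1) ≤ L := by
    have h1 := hLω 1 zero_le_one
    have h2 : ω 1 = 0 := hω.zero_on_unit 1 zero_le_one le_rfl
    rw [mul_one] at h1; rw [h2] at h1; linarith
  set c := (phiStar ω ((j : ℝ) / (m : ℝ))).toReal with hc
  have hc0 : 0 ≤ c := ENNReal.toReal_nonneg
  have hclb : (j : ℝ) / m - ω (Real.exp 1) ≤ c := by
    refine le_toReal_phiStar ?_ hfin
    have := ofReal_le_phiStar (ω := ω) ((j : ℝ) / m) 1 zero_le_one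
    rwa [mul_one] at this
  set x := (m : ℝ) * L - j + (m : ℝ) * c with hx
  have hx0 : 0 ≤ x := by
    have : (j : ℝ) ≤ m * ω (Real.exp 1) + m * c := by
      have := mul_le_mul_of_nonneg_left hclb hmpos.le
      rw [mul_sub, mul_div_cancel₀ _ hmpos.ne'] at this
      linarith
    nlinarith
  have hclaim : phiStar ω ((j : ℝ) / (m' : ℝ)) ≤ ENNReal.ofReal (x / m') := by
    refine iSup_le fun t => ENNReal.ofReal_le_ofReal ?_
    obtain ⟨t, ht⟩ := t
    have hphit : 0 ≤ ω (Real.exp t) := hω.nonneg _ (Real.exp_pos t).le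
    have hstep : ω (Real.exp (t + 1)) ≤ L * (1 + ω (Real.exp t)) := by
      have h1 := hLω (Real.exp t) (Real.exp_pos t).le
      rw [Real.exp_add, mul_comm (Real.exp t) (Real.exp 1)]
      exact h1
    have hup : (j : ℝ) / m * (t + 1) - ω (Real.exp (t + 1)) ≤ c :=
      le_toReal_phiStar (ofReal_le_phiStar _ _ (by linarith)) hfin
    have hup' : (j : ℝ) * (t + 1) ≤ (ω (Real.exp (t + 1)) + c) * m := by
      rw [div_mul_eq_mul_div, sub_le_iff_le_add, div_le_iff₀ hmpos] at hup
      linarith [hup]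
    have h1 : (j : ℝ) * t - (m' : ℝ) * ω (Real.exp t) ≤ x := by
      nlinarith [mul_le_mul_of_nonneg_right hstep hmpos.le]
    have heq : (j : ℝ) / m' * t - ω (Real.exp t) =
        ((j : ℝ) * t - (m' : ℝ) * ω (Real.exp t)) / m' := by
      field_simp
    rw [heq]
    exact div_le_div_of_nonneg_right h1 hm'pos.le
  have h2 : (phiStar ω ((j : ℝ) / (m' : ℝ))).toReal ≤ x / m' := by
    have := ENNReal.toReal_mono (by simp) hclaim
    rwa [ENNReal.toReal_ofReal (div_nonneg hx0 hm'pos.le)] at this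
  have h3 : (m' : ℝ) * (phiStar ω ((j : ℝ) / (m' : ℝ))).toReal ≤ x := by
    have := mul_le_mul_of_nonneg_left h2 hm'pos.le
    rwa [mul_div_cancel₀ _ hm'pos.ne'] at this
  linarith [h3]

end Stmt5Aux

/-- Multiplication estimate for the `r`-seminorms (proof of Proposition 3.7):
`r_{m,n₁+n₂}(fg) ≤ e^{mL} r_{m',n₁}(f) r_{m',n₂}(g)`. -/
theorem stmt5 {N : ℕ} (hN : 1 ≤ N) (ω : ℝ → ℝ) (hω : IsNQWeight ω)
    (L : ℝ) (hL : 1 ≤ L) (hLω : ∀ t, 0 ≤ t → ω (Real.exp 1 * t) ≤ L * (1 + ω t))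
    (m n₁ n₂ m' : ℕ) (hm : 1 ≤ m) (hn₁ : 1 ≤ n₁) (hn₂ : 1 ≤ n₂) (hm' : L * m ≤ (m' : ℝ))
    (f g : EuclideanSpace ℝ (Fin N) → ℂ) (hf : ContDiff ℝ (⊤ : ℕ∞) f) (hg : ContDiff ℝ (⊤ : ℕ∞) g) :
    rSem ω m (n₁ + n₂) (fun x => f x * g x) ≤
      ENNReal.ofReal (Real.exp (m * L)) * (rSem ω m' n₁ f * rSem ω m' n₂ g) := by
  classical
  have hphi : ∀ t : ℝ, 0 ≤ t → 0 ≤ ω (Real.exp t) :=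
    fun t _ => hω.nonneg _ (Real.exp_pos t).le
  have hmpos : (0 : ℝ) < m := by exact_mod_cast hm
  have hm'pos : (0 : ℝ) < m' := lt_of_lt_of_le (by nlinarith) hm'
  have hmm' : (m : ℝ) ≤ m' := by nlinarith
  set Rf := rSem ω m' n₁ f with hRf
  set Rg := rSem ω m' n₂ g with hRg
  rw [rSem]
  refine iSup_le fun j => iSup_le fun x => ?_
  by_cases hfin : ((m : ℝ≥0∞) * phiStar ω ((j : ℝ) / (m : ℝ))) = ∞
  · simp [expNegE, hfin]
  -- finite case
  have hPfin : phiStar ω ((j : ℝ) / (m : ℝ)) ≠ ∞ := by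
    intro h
    exact hfin (by rw [h, ENNReal.mul_top (by exact_mod_cast Nat.one_le_iff_ne_zero.mp hm)])
  set c := (phiStar ω ((j : ℝ) / (m : ℝ))).toReal with hcdef
  have hu : ((m : ℝ≥0∞) * phiStar ω ((j : ℝ) / (m : ℝ))).toReal = (m : ℝ) * c := by
    rw [ENNReal.toReal_mul, ENNReal.toReal_natCast]
  rw [expNegE, if_neg hfin, hu]
  -- Leibniz rule
  have hLeib := norm_iteratedFDeriv_mul_le hf hg x (n := j) (by exact_mod_cast le_top)
  set W := Real.exp (-((n₁ + n₂ : ℕ) * ω ‖x‖)) with hW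
  have hW0 : 0 ≤ W := Real.exp_pos _ |>.le
  set U := Real.exp (-((m : ℝ) * c)) with hU
  have hU0 : 0 ≤ U := Real.exp_pos _ |>.le
  rw [← ENNReal.ofReal_mul (by positivity)]
  have step1 : ENNReal.ofReal (‖iteratedFDeriv ℝ j (fun x => f x * g x) x‖ * W * U) ≤
      ENNReal.ofReal ((∑ k ∈ Finset.range (j + 1), (j.choose k : ℝ) *
        ‖iteratedFDeriv ℝ k f x‖ * ‖iteratedFDeriv ℝ (j - k) g x‖) * W * U) := by
    refine ENNReal.ofReal_le_ofReal ?_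
    have hnn : (0:ℝ) ≤ W * U := by positivity
    calc ‖iteratedFDeriv ℝ j (fun x => f x * g x) x‖ * W * U
        = ‖iteratedFDeriv ℝ j (fun x => f x * g x) x‖ * (W * U) := by ring
      _ ≤ _ * (W * U) := mul_le_mul_of_nonneg_right hLeib hnn
      _ = _ := by ring
  refine step1.trans ?_
  rw [Finset.sum_mul, Finset.sum_mul,
    ENNReal.ofReal_sum_of_nonneg (fun k _ => by positivity)]
  -- bound each summand
  have hterm : ∀ k ∈ Finset.range (j + 1),
      ENNReal.ofReal ((j.choose k : ℝ) * ‖iteratedFDeriv ℝ k f x‖ *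
        ‖iteratedFDeriv ℝ (j - k) g x‖ * W * U) ≤
      ENNReal.ofReal ((j.choose k : ℝ) * Real.exp ((m : ℝ) * L - j)) * (Rf * Rg) := by
    intro k hkmem
    have hk : k ≤ j := Finset.mem_range_succ_iff.mp hkmem
    have hkk : ((k : ℝ) + ((j - k : ℕ) : ℝ)) = (j : ℝ) := by
      push_cast [Nat.cast_sub hk]; ring
    -- finiteness of the two phiStar values
    have hle1 : (k : ℝ) / m' ≤ (j : ℝ) / m :=
      div_le_div₀ (Nat.cast_nonneg j) (by exact_mod_cast hk) hmpos hmm'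
    have hle2 : ((j - k : ℕ) : ℝ) / m' ≤ (j : ℝ) / m :=
      div_le_div₀ (Nat.cast_nonneg j) (by exact_mod_cast Nat.sub_le j k) hmpos hmm'
    have hfa : phiStar ω ((k : ℝ) / m') ≠ ∞ :=
      ne_top_of_le_ne_top hPfin (Stmt5Aux.phiStar_mono hle1)
    have hfb : phiStar ω (((j - k : ℕ) : ℝ) / m') ≠ ∞ :=
      ne_top_of_le_ne_top hPfin (Stmt5Aux.phiStar_mono hle2)
    set pa := (phiStar ω ((k : ℝ) / m')).toReal with hpa
    set pb := (phiStar ω (((j - k : ℕ) : ℝ) / m')).toReal with hpb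
    have hpa0 : 0 ≤ pa := ENNReal.toReal_nonneg
    have hpb0 : 0 ≤ pb := ENNReal.toReal_nonneg
    -- key inequality
    have hPjm' : phiStar ω ((j : ℝ) / m') ≠ ∞ :=
      ne_top_of_le_ne_top hPfin (Stmt5Aux.phiStar_mono
        (div_le_div₀ (Nat.cast_nonneg j) le_rfl hmpos hmm'))
    have hsuper : pa + pb ≤ (phiStar ω ((j : ℝ) / m')).toReal := by
      have h := Stmt5Aux.phiStar_superadd_real (ω := ω) hphi
        (div_nonneg (Nat.cast_nonneg k) hm'pos.le)
        (div_nonneg (Nat.cast_nonneg _) hm'pos.le)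
        (by rw [← add_div, hkk]; exact hPjm')
      rwa [← add_div, hkk] at h
    have hkey : (j : ℝ) + (m' : ℝ) * pa + (m' : ℝ) * pb ≤ (m : ℝ) * L + (m : ℝ) * c := by
      have h1 := Stmt5Aux.key_shift hω hL hLω hm hm' (j := j) hPfin
      nlinarith [hsuper]
    -- rewrite the expNegE factors
    have hEa : expNegE ((m' : ℝ≥0∞) * phiStar ω ((k : ℝ) / (m' : ℝ))) =
        ENNReal.ofReal (Real.exp (-((m' : ℝ) * pa))) := by
      rw [expNegE, if_neg (ENNReal.mul_ne_top (ENNReal.natCast_ne_top m') hfa),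
        ENNReal.toReal_mul, ENNReal.toReal_natCast]
    have hEb : expNegE ((m' : ℝ≥0∞) * phiStar ω (((j - k : ℕ) : ℝ) / (m' : ℝ))) =
        ENNReal.ofReal (Real.exp (-((m' : ℝ) * pb))) := by
      rw [expNegE, if_neg (ENNReal.mul_ne_top (ENNReal.natCast_ne_top m') hfb),
        ENNReal.toReal_mul, ENNReal.toReal_natCast]
    -- split the weight factor
    have hWsplit : W = Real.exp (-((n₁ : ℝ) * ω ‖x‖)) * Real.exp (-((n₂ : ℝ) * ω ‖x‖)) := by
      rw [hW, ← Real.exp_add]; push_cast; ring_nf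
    have hexp : U ≤ Real.exp ((m : ℝ) * L - j) *
        (Real.exp (-((m' : ℝ) * pa)) * Real.exp (-((m' : ℝ) * pb))) := by
      rw [hU, ← Real.exp_add, ← Real.exp_add]
      exact Real.exp_le_exp.mpr (by linarith)
    -- real estimate for the summand
    have hreal : (j.choose k : ℝ) * ‖iteratedFDeriv ℝ k f x‖ *
        ‖iteratedFDeriv ℝ (j - k) g x‖ * W * U ≤
        ((j.choose k : ℝ) * Real.exp ((m : ℝ) * L - j)) *
          ((‖iteratedFDeriv ℝ k f x‖ * Real.exp (-((n₁ : ℝ) * ω ‖x‖))) *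
            Real.exp (-((m' : ℝ) * pa))) *
          ((‖iteratedFDeriv ℝ (j - k) g x‖ * Real.exp (-((n₂ : ℝ) * ω ‖x‖))) *
            Real.exp (-((m' : ℝ) * pb))) := by
      rw [hWsplit]
      have h2 := mul_le_mul_of_nonneg_left hexp
        (a := (j.choose k : ℝ) * ‖iteratedFDeriv ℝ k f x‖ *
          ‖iteratedFDeriv ℝ (j - k) g x‖ *
          (Real.exp (-((n₁ : ℝ) * ω ‖x‖)) * Real.exp (-((n₂ : ℝ) * ω ‖x‖))))
        (by positivity)
      calc (j.choose k : ℝ) * ‖iteratedFDeriv ℝ k f x‖ * ‖iteratedFDeriv ℝ (j - k) g x‖ *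
            (Real.exp (-((n₁ : ℝ) * ω ‖x‖)) * Real.exp (-((n₂ : ℝ) * ω ‖x‖))) * U
          ≤ (j.choose k : ℝ) * ‖iteratedFDeriv ℝ k f x‖ * ‖iteratedFDeriv ℝ (j - k) g x‖ *
            (Real.exp (-((n₁ : ℝ) * ω ‖x‖)) * Real.exp (-((n₂ : ℝ) * ω ‖x‖))) *
            (Real.exp ((m : ℝ) * L - j) *
              (Real.exp (-((m' : ℝ) * pa)) * Real.exp (-((m' : ℝ) * pb)))) := h2
        _ = _ := by ring
    refine (ENNReal.ofReal_le_ofReal hreal).trans ?_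
    rw [ENNReal.ofReal_mul (by positivity), ENNReal.ofReal_mul (by positivity)]
    have hfpart : ENNReal.ofReal ((‖iteratedFDeriv ℝ k f x‖ *
        Real.exp (-((n₁ : ℝ) * ω ‖x‖))) * Real.exp (-((m' : ℝ) * pa))) ≤ Rf := by
      rw [ENNReal.ofReal_mul (by positivity), ← hEa, hRf, rSem]
      exact le_iSup_of_le k (le_iSup_of_le x le_rfl)
    have hgpart : ENNReal.ofReal ((‖iteratedFDeriv ℝ (j - k) g x‖ *
        Real.exp (-((n₂ : ℝ) * ω ‖x‖))) * Real.exp (-((m' : ℝ) * pb))) ≤ Rg := by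
      rw [ENNReal.ofReal_mul (by positivity), ← hEb, hRg, rSem]
      exact le_iSup_of_le (j - k) (le_iSup_of_le x le_rfl)
    calc ENNReal.ofReal ((j.choose k : ℝ) * Real.exp ((m : ℝ) * L - j)) *
          ENNReal.ofReal _ * ENNReal.ofReal _
        ≤ ENNReal.ofReal ((j.choose k : ℝ) * Real.exp ((m : ℝ) * L - j)) * Rf * Rg := by
          exact mul_le_mul' (mul_le_mul' le_rfl hfpart) hgpart
      _ = ENNReal.ofReal ((j.choose k : ℝ) * Real.exp ((m : ℝ) * L - j)) * (Rf * Rg) := by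
          rw [mul_assoc]
  refine (Finset.sum_le_sum hterm).trans ?_
  rw [← Finset.sum_mul, ← ENNReal.ofReal_sum_of_nonneg (fun k _ => by positivity),
    ← Finset.sum_mul]
  have hchoose : (∑ k ∈ Finset.range (j + 1), (j.choose k : ℝ)) = 2 ^ j := by
    rw [← Nat.cast_sum]
    rw [Nat.sum_range_choose]
    push_cast; ring
  rw [hchoose]
  have h2e : (2 : ℝ) ^ j ≤ Real.exp j := by
    calc (2 : ℝ) ^ j ≤ Real.exp 1 ^ j :=
          pow_le_pow_left₀ (by norm_num) (by nlinarith [Real.add_one_le_exp 1]) j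
      _ = Real.exp j := by rw [← Real.exp_nat_mul]; ring_nf
  have hfinal : (2 : ℝ) ^ j * Real.exp ((m : ℝ) * L - j) ≤ Real.exp ((m : ℝ) * L) := by
    have h1 : Real.exp ((m : ℝ) * L - j) * Real.exp (j : ℝ) = Real.exp ((m : ℝ) * L) := by
      rw [← Real.exp_add]; ring_nf
    nlinarith [Real.exp_pos ((m : ℝ) * L - (j : ℝ)), Real.exp_pos ((j : ℝ)),
      mul_le_mul_of_nonneg_left h2e (Real.exp_pos ((m : ℝ) * L - (j : ℝ))).le]
  exact mul_le_mul' (ENNReal.ofReal_le_ofReal hfinal) le_rfl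

end
end

section
/- Let ω be a non-quasianalytic weight function, N ≥ 1, and K ≥ 1 with ω(t₁+t₂) ≤ K(1+ω(t₁)+ω(t₂)) for all t₁, t₂ ≥ 0. Let n₀ ∈ ℕ be such that x ↦ exp(−n₀·ω(|x|)) belongs to L¹(ℝ^N), and let m, n, n' ∈ ℕ with n' ≥ K·n + n₀. Then for all f, g ∈ 𝒮_ω(ℝ^N), the convolution f⋆g (given by (f⋆g)(x) = ∫_{ℝ^N} f(y)·g(x−y) dy) satisfies q_{m,n}(f⋆g) ≤ e^{Kn} · ‖exp(−n₀·ω(|·|))‖_{L¹(ℝ^N)} · q_{m,n'}(f) · q_{m,n'}(g), where q_{m,n}(f) := sup_{j ∈ ℕ, x ∈ ℝ^N} ‖D^j f(x)‖·exp(n·ω(|x|) − m·φ*_ω(j/m)). -/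
open MeasureTheory
open scoped ENNReal

noncomputable section

set_option maxHeartbeats 1000000
set_option synthInstance.maxHeartbeats 1000000

/-- One differentiation step for the convolution of an integrable function with a smooth
function with bounded derivative. -/
lemma conv_hasFDerivAt {N : ℕ} {F : Type} [NormedAddCommGroup F] [NormedSpace ℝ F]
    [NormedSpace ℂ F] [SMulCommClass ℝ ℂ F]
    {f : EuclideanSpace ℝ (Fin N) → ℂ} (hf : Integrable f)
    {G : EuclideanSpace ℝ (Fin N) → F} (hG : ContDiff ℝ (⊤ : ℕ∞) G)
    {C₀ C₁ : ℝ} (hGb : ∀ z, ‖G z‖ ≤ C₀) (hG'b : ∀ z, ‖fderiv ℝ G z‖ ≤ C₁)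
    (x₀ : EuclideanSpace ℝ (Fin N)) :
    HasFDerivAt (fun x => ∫ y, f y • G (x - y))
      (∫ y, f y • fderiv ℝ G (x₀ - y)) x₀ := by
  have hGc : Continuous G := hG.continuous
  have hG'c : Continuous (fderiv ℝ G) := (hG.fderiv_right (m := (⊤ : ℕ∞)) (by simp)).continuous
  have hdiff : ∀ (y x : EuclideanSpace ℝ (Fin N)),
      HasFDerivAt (fun x => f y • G (x - y)) (f y • fderiv ℝ G (x - y)) x := by
    intro y x
    have h1 : HasFDerivAt (fun x : EuclideanSpace ℝ (Fin N) => x - y)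
        (ContinuousLinearMap.id ℝ _) x := (hasFDerivAt_id x).sub_const y
    have h2 := ((hG.differentiable (by simp) (x - y)).hasFDerivAt.comp x h1).const_smul (f y)
    simp at h2; exact h2
  apply hasFDerivAt_integral_of_dominated_of_fderiv_le (F' := fun x y => f y • fderiv ℝ G (x - y))
    (bound := fun y => ‖f y‖ * C₁) (s := Metric.ball x₀ 1) (Metric.ball_mem_nhds x₀ one_pos)
  · filter_upwards with x
    exact hf.aestronglyMeasurable.smul
      ((hGc.comp (continuous_const.sub continuous_id)).aestronglyMeasurable)
  · refine (hf.norm.mul_const C₀).mono'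
      (hf.aestronglyMeasurable.smul
        ((hGc.comp (continuous_const.sub continuous_id)).aestronglyMeasurable)) ?_
    filter_upwards with y
    rw [norm_smul]
    exact mul_le_mul_of_nonneg_left (hGb _) (norm_nonneg _)
  · exact hf.aestronglyMeasurable.smul
      ((hG'c.comp (continuous_const.sub continuous_id)).aestronglyMeasurable)
  · filter_upwards with y x _
    exact (norm_smul (f y) (fderiv ℝ G (x - y))).le.trans
      (mul_le_mul_of_nonneg_left (hG'b _) (norm_nonneg _))
  · exact hf.norm.mul_const C₁
  · filter_upwards with y x _
    exact hdiff y x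

/-- Norm bound for iterated derivatives of the convolution of an integrable function with
a smooth function all of whose derivatives are bounded. -/
lemma conv_iteratedFDeriv_norm_le {N : ℕ} {f : EuclideanSpace ℝ (Fin N) → ℂ}
    (hf : Integrable f) :
    ∀ (k : ℕ) (F : Type) [NormedAddCommGroup F] [NormedSpace ℝ F] [NormedSpace ℂ F]
      [SMulCommClass ℝ ℂ F] (G : EuclideanSpace ℝ (Fin N) → F), ContDiff ℝ (⊤ : ℕ∞) G →
      (∀ i : ℕ, ∃ C : ℝ, ∀ z, ‖iteratedFDeriv ℝ i G z‖ ≤ C) →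
      ∀ x, ‖iteratedFDeriv ℝ k (fun x => ∫ y, f y • G (x - y)) x‖ ≤
        ∫ y, ‖f y‖ * ‖iteratedFDeriv ℝ k G (x - y)‖ := by
  intro k
  induction k with
  | zero =>
    intro F _ _ _ _ G hG hGb x
    simp only [norm_iteratedFDeriv_zero]
    refine (norm_integral_le_integral_norm _).trans_eq ?_
    exact integral_congr_ae (.of_forall fun y => norm_smul _ _)
  | succ k IH =>
    intro F _ _ _ _ G hG hGb x
    obtain ⟨C₀, hC₀⟩ := hGb 0
    obtain ⟨C₁, hC₁⟩ := hGb 1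
    have hC₀' : ∀ z, ‖G z‖ ≤ C₀ := fun z => by
      have := hC₀ z; rwa [norm_iteratedFDeriv_zero] at this
    have hC₁' : ∀ z, ‖fderiv ℝ G z‖ ≤ C₁ := fun z => by
      have := hC₁ z
      rwa [← norm_iteratedFDeriv_fderiv, norm_iteratedFDeriv_zero] at this
    have hfd : fderiv ℝ (fun x => ∫ y, f y • G (x - y))
        = fun x => ∫ y, f y • fderiv ℝ G (x - y) :=
      funext fun x₀ => (conv_hasFDerivAt hf hG hC₀' hC₁' x₀).fderiv
    rw [← norm_iteratedFDeriv_fderiv, hfd]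
    have hG' : ContDiff ℝ (⊤ : ℕ∞) (fderiv ℝ G) := hG.fderiv_right (m := (⊤ : ℕ∞)) (by simp)
    have hGb' : ∀ i : ℕ, ∃ C : ℝ, ∀ z, ‖iteratedFDeriv ℝ i (fderiv ℝ G) z‖ ≤ C := fun i => by
      obtain ⟨C, hC⟩ := hGb (i + 1)
      exact ⟨C, fun z => by rw [norm_iteratedFDeriv_fderiv]; exact hC z⟩
    refine (IH _ (fderiv ℝ G) hG' hGb' x).trans_eq ?_
    exact integral_congr_ae (.of_forall fun y => by
      simp only []; rw [norm_iteratedFDeriv_fderiv])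

lemma phiStar_zero {ω : ℝ → ℝ} (hω : ∀ t, 0 ≤ t → 0 ≤ ω t) : phiStar ω 0 = 0 := by
  refine le_antisymm (iSup_le fun t => ?_) zero_le
  have h := hω (Real.exp t.1) (Real.exp_pos _).le
  simp only [zero_mul, zero_sub]
  exact le_of_eq (ENNReal.ofReal_eq_zero.2 (by linarith))

lemma point_le_qSem {N : ℕ} (ω : ℝ → ℝ) (m n : ℕ) (f : EuclideanSpace ℝ (Fin N) → ℂ)
    (j : ℕ) (x : EuclideanSpace ℝ (Fin N)) :
    ENNReal.ofReal (‖iteratedFDeriv ℝ j f x‖ * Real.exp (n * ω ‖x‖)) *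
      expNegE ((m : ℝ≥0∞) * phiStar ω ((j : ℝ) / (m : ℝ))) ≤ qSem ω m n f := by
  exact le_iSup₂ (f := fun (j : ℕ) (x : EuclideanSpace ℝ (Fin N)) =>
    ENNReal.ofReal (‖iteratedFDeriv ℝ j f x‖ * Real.exp (n * ω ‖x‖)) *
      expNegE ((m : ℝ≥0∞) * phiStar ω ((j : ℝ) / (m : ℝ)))) j x

lemma qSem_real_bound {N : ℕ} {ω : ℝ → ℝ} {m n : ℕ} {f : EuclideanSpace ℝ (Fin N) → ℂ}
    (hQ : qSem ω m n f ≠ ∞) (j : ℕ) (x : EuclideanSpace ℝ (Fin N))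
    (hfin : (m : ℝ≥0∞) * phiStar ω ((j : ℝ) / (m : ℝ)) ≠ ∞) :
    ‖iteratedFDeriv ℝ j f x‖ * Real.exp (n * ω ‖x‖) *
      Real.exp (-(((m : ℝ≥0∞) * phiStar ω ((j : ℝ) / (m : ℝ))).toReal)) ≤
      (qSem ω m n f).toReal := by
  have h := point_le_qSem ω m n f j x
  unfold expNegE at h
  rw [if_neg hfin, ← ENNReal.ofReal_mul (by positivity)] at h
  exact (ENNReal.ofReal_le_iff_le_toReal hQ).1 h

lemma norm_le_of_qSem {N : ℕ} {ω : ℝ → ℝ} {m n : ℕ} {u : EuclideanSpace ℝ (Fin N) → ℂ}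
    (hωnn : ∀ t, 0 ≤ t → 0 ≤ ω t) (hm : 1 ≤ m) (hQ : qSem ω m n u ≠ ∞)
    (y : EuclideanSpace ℝ (Fin N)) :
    ‖u y‖ ≤ (qSem ω m n u).toReal * Real.exp (-(n * ω ‖y‖)) := by
  have h0 : (m : ℝ≥0∞) * phiStar ω (((0 : ℕ) : ℝ) / (m : ℝ)) = 0 := by
    rw [Nat.cast_zero, zero_div, phiStar_zero hωnn, mul_zero]
  have h := qSem_real_bound hQ 0 y (by rw [h0]; exact ENNReal.zero_ne_top)
  rw [h0] at h
  simp only [ENNReal.toReal_zero, neg_zero, Real.exp_zero, mul_one,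
    norm_iteratedFDeriv_zero] at h
  calc ‖u y‖ = ‖u y‖ * Real.exp (n * ω ‖y‖) * Real.exp (-(n * ω ‖y‖)) := by
        rw [mul_assoc, ← Real.exp_add]; simp
  _ ≤ (qSem ω m n u).toReal * Real.exp (-(n * ω ‖y‖)) :=
      mul_le_mul_of_nonneg_right h (Real.exp_nonneg _)

/-- In a Björck space, all iterated derivatives are (globally) bounded. -/
lemma derivs_bounded {N : ℕ} {ω : ℝ → ℝ} (hω : IsNQWeight ω)
    {g : EuclideanSpace ℝ (Fin N) → ℂ} (hg : MemSomega ω g) :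
    ∀ i : ℕ, ∃ C : ℝ, ∀ z, ‖iteratedFDeriv ℝ i g z‖ ≤ C := by
  obtain ⟨a, b, hb, hγ⟩ := hω.gamma
  intro i
  set m : ℕ := max 1 ⌈(i : ℝ) / b⌉₊ with hmdef
  have hm1 : 1 ≤ m := le_max_left _ _
  have hmR : (1 : ℝ) ≤ (m : ℝ) := by exact_mod_cast hm1
  have hs : (i : ℝ) / (m : ℝ) ≤ b := by
    have h0 : (i : ℝ) / b ≤ (⌈(i : ℝ) / b⌉₊ : ℝ) := Nat.le_ceil _
    have hmc : ((⌈(i : ℝ) / b⌉₊ : ℕ) : ℝ) ≤ (m : ℝ) := by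
      exact_mod_cast le_max_right 1 ⌈(i : ℝ) / b⌉₊
    rw [div_le_iff₀ (by linarith)]
    have h1 : (i : ℝ) / b ≤ (m : ℝ) := le_trans h0 hmc
    calc (i : ℝ) = b * ((i : ℝ) / b) := by field_simp
    _ ≤ b * m := mul_le_mul_of_nonneg_left h1 hb.le
  have hfin : phiStar ω ((i : ℝ) / (m : ℝ)) ≤ ENNReal.ofReal |a| := by
    refine iSup_le fun t => ENNReal.ofReal_le_ofReal ?_
    have hlog : t.1 ≤ Real.log (1 + Real.exp t.1) := by
      calc t.1 = Real.log (Real.exp t.1) := (Real.log_exp _).symm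
      _ ≤ Real.log (1 + Real.exp t.1) :=
          Real.log_le_log (Real.exp_pos _) (by linarith [Real.exp_pos t.1])
    have h2 := hγ (Real.exp t.1) (Real.exp_pos _).le
    have h3 : ((i : ℝ) / m) * t.1 ≤ b * t.1 := mul_le_mul_of_nonneg_right hs t.2
    have h4 := mul_le_mul_of_nonneg_left hlog hb.le
    have h5 := neg_abs_le a
    linarith
  have hfin2 : (m : ℝ≥0∞) * phiStar ω ((i : ℝ) / (m : ℝ)) ≠ ∞ :=
    ENNReal.mul_ne_top (ENNReal.natCast_ne_top m)
      (ne_top_of_le_ne_top ENNReal.ofReal_ne_top hfin)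
  have hQ := hg.2 m 0 hm1
  refine ⟨(qSem ω m 0 g).toReal *
    Real.exp (((m : ℝ≥0∞) * phiStar ω ((i : ℝ) / (m : ℝ))).toReal), fun z => ?_⟩
  have h := qSem_real_bound hQ i z hfin2
  simp only [Nat.cast_zero, zero_mul, Real.exp_zero, mul_one] at h
  calc ‖iteratedFDeriv ℝ i g z‖
      = ‖iteratedFDeriv ℝ i g z‖ *
          Real.exp (-(((m : ℝ≥0∞) * phiStar ω ((i : ℝ) / (m : ℝ))).toReal)) *
          Real.exp (((m : ℝ≥0∞) * phiStar ω ((i : ℝ) / (m : ℝ))).toReal) := by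
        rw [mul_assoc, ← Real.exp_add]; simp
  _ ≤ _ := mul_le_mul_of_nonneg_right h (Real.exp_nonneg _)


/-- Convolution estimate (proof of Theorem 3.11):
`q_{m,n}(f⋆g) ≤ e^{Kn} ‖e^{−n₀ω}‖₁ q_{m,n'}(f) q_{m,n'}(g)`. -/
theorem stmt7 {N : ℕ} (hN : 1 ≤ N) (ω : ℝ → ℝ) (hω : IsNQWeight ω)
    (K : ℝ) (hK : 1 ≤ K)
    (hKω : ∀ t₁, 0 ≤ t₁ → ∀ t₂, 0 ≤ t₂ → ω (t₁ + t₂) ≤ K * (1 + ω t₁ + ω t₂))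
    (n₀ : ℕ)
    (hn₀ : Integrable (fun x : EuclideanSpace ℝ (Fin N) => Real.exp (-((n₀ : ℝ) * ω ‖x‖))))
    (m n n' : ℕ) (hm : 1 ≤ m) (hn : 1 ≤ n) (hn' : K * n + n₀ ≤ (n' : ℝ))
    (f g : EuclideanSpace ℝ (Fin N) → ℂ)
    (hf : MemSomega ω f) (hg : MemSomega ω g) :
    qSem ω m n (fun x => ∫ y, f y * g (x - y)) ≤
      ENNReal.ofReal (Real.exp (K * n)) *
        ENNReal.ofReal (∫ y : EuclideanSpace ℝ (Fin N), Real.exp (-((n₀ : ℝ) * ω ‖y‖))) *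
        qSem ω m n' f * qSem ω m n' g := by
  obtain ⟨hfC, hfQ⟩ := hf
  obtain ⟨hgC, hgQ⟩ := hg
  have hωnn := hω.nonneg
  have hQf : qSem ω m n' f ≠ ∞ := hfQ m n' hm
  have hQg : qSem ω m n' g ≠ ∞ := hgQ m n' hm
  set A := (qSem ω m n' f).toReal with hAdef
  set B := (qSem ω m n' g).toReal with hBdef
  have hA : 0 ≤ A := ENNReal.toReal_nonneg
  have hB : 0 ≤ B := ENNReal.toReal_nonneg
  have hfb : ∀ y, ‖f y‖ ≤ A * Real.exp (-(n' * ω ‖y‖)) :=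
    fun y => norm_le_of_qSem hωnn hm hQf y
  have hnn : (0:ℝ) ≤ (n : ℝ) := Nat.cast_nonneg n
  have hn1 : (1:ℝ) ≤ (n : ℝ) := by exact_mod_cast hn
  have hKn : (1:ℝ) ≤ K * n := by nlinarith
  have hn0' : (n₀ : ℝ) ≤ (n' : ℝ) := by linarith
  have hexp_le : ∀ y : EuclideanSpace ℝ (Fin N),
      Real.exp (-(n' * ω ‖y‖)) ≤ Real.exp (-(n₀ * ω ‖y‖)) := fun y => by
    have hwy : 0 ≤ ω ‖y‖ := hωnn _ (norm_nonneg _)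
    exact Real.exp_le_exp.2 (by nlinarith)
  have hfint : Integrable f := by
    refine (hn₀.const_mul A).mono' hfC.continuous.aestronglyMeasurable ?_
    filter_upwards with y
    exact (hfb y).trans (mul_le_mul_of_nonneg_left (hexp_le y) hA)
  have hgb := derivs_bounded hω ⟨hgC, hgQ⟩
  unfold qSem
  refine iSup₂_le fun j x => ?_
  by_cases hfin : (m : ℝ≥0∞) * phiStar ω ((j : ℝ) / (m : ℝ)) = ∞
  · unfold expNegE
    rw [if_pos hfin, mul_zero]
    exact zero_le
  · set c := ((m : ℝ≥0∞) * phiStar ω ((j : ℝ) / (m : ℝ))).toReal with hc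
    unfold expNegE
    rw [if_neg hfin, ← ENNReal.ofReal_mul (by positivity)]
    have hgb2 : ∀ z, ‖iteratedFDeriv ℝ j g z‖ * Real.exp (n' * ω ‖z‖) * Real.exp (-c) ≤ B :=
      fun z => qSem_real_bound hQg j z hfin
    have key : ‖iteratedFDeriv ℝ j (fun x => ∫ y, f y * g (x - y)) x‖ ≤
        ∫ y, ‖f y‖ * ‖iteratedFDeriv ℝ j g (x - y)‖ := by
      have h := conv_iteratedFDeriv_norm_le hfint j ℂ g hgC hgb x
      simpa only [smul_eq_mul] using h
    have hpt : ∀ y : EuclideanSpace ℝ (Fin N),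
        ‖f y‖ * ‖iteratedFDeriv ℝ j g (x - y)‖ * (Real.exp (n * ω ‖x‖) * Real.exp (-c)) ≤
          (A * B * Real.exp (K * n)) * Real.exp (-(n₀ * ω ‖y‖)) := by
      intro y
      have hwy : 0 ≤ ω ‖y‖ := hωnn _ (norm_nonneg _)
      have hwz : 0 ≤ ω ‖x - y‖ := hωnn _ (norm_nonneg _)
      have hwx : ω ‖x‖ ≤ K * (1 + ω ‖x - y‖ + ω ‖y‖) := by
        have htri : ‖x‖ ≤ ‖x - y‖ + ‖y‖ := by
          have h := norm_add_le (x - y) y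
          rwa [sub_add_cancel] at h
        have h1 : ω ‖x‖ ≤ ω (‖x - y‖ + ‖y‖) :=
          hω.monotone (Set.mem_Ici.2 (norm_nonneg x))
            (Set.mem_Ici.2 (by positivity)) htri
        exact h1.trans (hKω _ (norm_nonneg _) _ (norm_nonneg _))
      have hexp : (n : ℝ) * ω ‖x‖ ≤
          K * n + -(n₀ * ω ‖y‖) + n' * ω ‖y‖ + n' * ω ‖x - y‖ := by
        have h2 : (n : ℝ) * ω ‖x‖ ≤ (n : ℝ) * (K * (1 + ω ‖x - y‖ + ω ‖y‖)) :=
          mul_le_mul_of_nonneg_left hwx hnn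
        have hz : K * n * ω ‖x - y‖ ≤ n' * ω ‖x - y‖ :=
          mul_le_mul_of_nonneg_right (by linarith [show (0:ℝ) ≤ (n₀:ℝ) from Nat.cast_nonneg n₀]) hwz
        have hy : K * n * ω ‖y‖ ≤ ((n' : ℝ) - n₀) * ω ‖y‖ :=
          mul_le_mul_of_nonneg_right (by linarith) hwy
        nlinarith
      have hr : Real.exp (n * ω ‖x‖) ≤
          Real.exp (K * n) * Real.exp (-(n₀ * ω ‖y‖)) * Real.exp (n' * ω ‖y‖) *
            Real.exp (n' * ω ‖x - y‖) := by
        rw [← Real.exp_add, ← Real.exp_add, ← Real.exp_add]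
        exact Real.exp_le_exp.2 hexp
      have hf2 : ‖f y‖ * Real.exp (n' * ω ‖y‖) ≤ A := by
        have h := mul_le_mul_of_nonneg_right (hfb y) (Real.exp_nonneg (n' * ω ‖y‖))
        rwa [mul_assoc, ← Real.exp_add, neg_add_cancel, Real.exp_zero, mul_one] at h
      have hg2 := hgb2 (x - y)
      calc ‖f y‖ * ‖iteratedFDeriv ℝ j g (x - y)‖ * (Real.exp (n * ω ‖x‖) * Real.exp (-c))
          ≤ ‖f y‖ * ‖iteratedFDeriv ℝ j g (x - y)‖ *
            ((Real.exp (K * n) * Real.exp (-(n₀ * ω ‖y‖)) * Real.exp (n' * ω ‖y‖) *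
              Real.exp (n' * ω ‖x - y‖)) * Real.exp (-c)) := by
            refine mul_le_mul_of_nonneg_left
              (mul_le_mul_of_nonneg_right hr (Real.exp_nonneg _)) (by positivity)
      _ = (‖f y‖ * Real.exp (n' * ω ‖y‖)) *
            (‖iteratedFDeriv ℝ j g (x - y)‖ * Real.exp (n' * ω ‖x - y‖) * Real.exp (-c)) *
            (Real.exp (K * n) * Real.exp (-(n₀ * ω ‖y‖))) := by ring
      _ ≤ A * B * (Real.exp (K * n) * Real.exp (-(n₀ * ω ‖y‖))) :=
            mul_le_mul_of_nonneg_right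
              (mul_le_mul hf2 hg2 (by positivity) hA) (by positivity)
      _ = (A * B * Real.exp (K * n)) * Real.exp (-(n₀ * ω ‖y‖)) := by ring
    have main : ‖iteratedFDeriv ℝ j (fun x => ∫ y, f y * g (x - y)) x‖ *
          Real.exp (n * ω ‖x‖) * Real.exp (-c) ≤
        Real.exp (K * n) *
          (∫ y : EuclideanSpace ℝ (Fin N), Real.exp (-((n₀ : ℝ) * ω ‖y‖))) * A * B := by
      calc ‖iteratedFDeriv ℝ j (fun x => ∫ y, f y * g (x - y)) x‖ *
            Real.exp (n * ω ‖x‖) * Real.exp (-c)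
          = ‖iteratedFDeriv ℝ j (fun x => ∫ y, f y * g (x - y)) x‖ *
            (Real.exp (n * ω ‖x‖) * Real.exp (-c)) := by ring
      _ ≤ (∫ y, ‖f y‖ * ‖iteratedFDeriv ℝ j g (x - y)‖) *
            (Real.exp (n * ω ‖x‖) * Real.exp (-c)) :=
          mul_le_mul_of_nonneg_right key (by positivity)
      _ = ∫ y, ‖f y‖ * ‖iteratedFDeriv ℝ j g (x - y)‖ *
            (Real.exp (n * ω ‖x‖) * Real.exp (-c)) :=
          (integral_mul_const _ _).symm
      _ ≤ ∫ y : EuclideanSpace ℝ (Fin N),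
            (A * B * Real.exp (K * n)) * Real.exp (-((n₀ : ℝ) * ω ‖y‖)) :=
          integral_mono_of_nonneg (Filter.Eventually.of_forall fun y => by positivity)
            (hn₀.const_mul _) (Filter.Eventually.of_forall hpt)
      _ = (A * B * Real.exp (K * n)) *
            ∫ y : EuclideanSpace ℝ (Fin N), Real.exp (-((n₀ : ℝ) * ω ‖y‖)) :=
          integral_const_mul _ _
      _ = Real.exp (K * n) *
            (∫ y : EuclideanSpace ℝ (Fin N), Real.exp (-((n₀ : ℝ) * ω ‖y‖))) * A * B := by
          ring
    have hI : 0 ≤ ∫ y : EuclideanSpace ℝ (Fin N), Real.exp (-((n₀ : ℝ) * ω ‖y‖)) :=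
      integral_nonneg fun y => Real.exp_nonneg _
    calc ENNReal.ofReal (‖iteratedFDeriv ℝ j (fun x => ∫ y, f y * g (x - y)) x‖ *
            Real.exp (n * ω ‖x‖) * Real.exp (-c))
        ≤ ENNReal.ofReal (Real.exp (K * n) *
            (∫ y : EuclideanSpace ℝ (Fin N), Real.exp (-((n₀ : ℝ) * ω ‖y‖))) * A * B) :=
        ENNReal.ofReal_le_ofReal main
    _ = ENNReal.ofReal (Real.exp (K * n)) *
          ENNReal.ofReal (∫ y : EuclideanSpace ℝ (Fin N), Real.exp (-((n₀ : ℝ) * ω ‖y‖))) *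
          ENNReal.ofReal A * ENNReal.ofReal B := by
        rw [ENNReal.ofReal_mul (by positivity), ENNReal.ofReal_mul (by positivity),
          ENNReal.ofReal_mul (Real.exp_nonneg _)]
    _ ≤ ENNReal.ofReal (Real.exp (K * n)) *
          ENNReal.ofReal (∫ y : EuclideanSpace ℝ (Fin N), Real.exp (-((n₀ : ℝ) * ω ‖y‖))) *
          qSem ω m n' f * qSem ω m n' g := by
        gcongr
        · exact ENNReal.ofReal_toReal_le
        · exact ENNReal.ofReal_toReal_le


end
end

section
/- Let ω be a non-quasianalytic weight function and let L ≥ 1 satisfy ω(e·t) ≤ L(1+ω(t)) for all t ≥ 0. Then for all m, M ∈ ℕ with M ≥ m·L and every t ≥ 0 one has 2^t · exp(M·φ*_ω(t/M)) ≤ e^{mL} · exp(m·φ*_ω(t/m)), as an inequality in [0,∞] with the convention exp(+∞) := +∞. -/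
open MeasureTheory
open scoped ENNReal

noncomputable section

/-- `2^t exp(M φ*(t/M)) ≤ e^{mL} exp(m φ*(t/m))` in `[0,∞]`, with `exp(+∞) = +∞`. -/
theorem stmt16 (ω : ℝ → ℝ) (hω : IsNQWeight ω)
    (L : ℝ) (hL : 1 ≤ L) (hLω : ∀ t, 0 ≤ t → ω (Real.exp 1 * t) ≤ L * (1 + ω t))
    (m M : ℕ) (hm : 1 ≤ m) (hM : (m : ℝ) * L ≤ (M : ℝ))
    (t : ℝ) (ht : 0 ≤ t) :
    ENNReal.ofReal ((2 : ℝ) ^ t) * expE ((M : ℝ≥0∞) * phiStar ω (t / (M : ℝ))) ≤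
      ENNReal.ofReal (Real.exp ((m : ℝ) * L)) *
        expE ((m : ℝ≥0∞) * phiStar ω (t / (m : ℝ))) := by
  have hm1 : (1:ℝ) ≤ (m:ℝ) := by exact_mod_cast hm
  have hmpos : (0:ℝ) < (m:ℝ) := lt_of_lt_of_le one_pos hm1
  have hM1 : (1:ℝ) ≤ (M:ℝ) := le_trans (by nlinarith) hM
  have hMpos : (0:ℝ) < (M:ℝ) := lt_of_lt_of_le one_pos hM1
  have hφnn : ∀ s : ℝ, 0 ≤ s → 0 ≤ ω (Real.exp s) := fun s _ =>
    hω.nonneg _ (Real.exp_pos s).le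
  have hφ1 : ω (Real.exp 1) ≤ L := by
    have h := hLω 1 zero_le_one
    rw [hω.zero_on_unit 1 zero_le_one le_rfl] at h
    simpa using h
  have hstep : ∀ s : ℝ, 0 ≤ s → ω (Real.exp (s+1)) ≤ L + L * ω (Real.exp s) := by
    intro s hs
    have h := hLω (Real.exp s) (Real.exp_pos s).le
    rw [show Real.exp (s+1) = Real.exp 1 * Real.exp s by rw [← Real.exp_add]; ring_nf]
    linarith
  have hcastm : ((m:ℕ) : ℝ≥0∞) = ENNReal.ofReal (m:ℝ) := by
    simp [ENNReal.ofReal_natCast]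
  have hcastM : ((M:ℕ) : ℝ≥0∞) = ENNReal.ofReal (M:ℝ) := by
    simp [ENNReal.ofReal_natCast]
  -- bound: m * B ≥ ofReal (m * Y) for any index point
  have hBge : ∀ s : ℝ, (hs : 0 ≤ s) →
      ENNReal.ofReal ((m:ℝ) * (t/(m:ℝ) * s - ω (Real.exp s))) ≤
        ((m:ℕ) : ℝ≥0∞) * phiStar ω (t / (m:ℝ)) := by
    intro s hs
    have h1 : ENNReal.ofReal (t/(m:ℝ) * s - ω (Real.exp s)) ≤ phiStar ω (t/(m:ℝ)) :=
      le_iSup (fun u : {t : ℝ // 0 ≤ t} =>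
        ENNReal.ofReal (t/(m:ℝ) * u.1 - ω (Real.exp u.1))) ⟨s, hs⟩
    rw [ENNReal.ofReal_mul hmpos.le, ← hcastm]
    exact mul_le_mul_right h1 _
  have key : ((M:ℕ) : ℝ≥0∞) * phiStar ω (t / (M:ℝ)) + ENNReal.ofReal t ≤
      ENNReal.ofReal ((m:ℝ) * L) + ((m:ℕ) : ℝ≥0∞) * phiStar ω (t / (m:ℝ)) := by
    rw [phiStar, ENNReal.mul_iSup, ENNReal.iSup_add]
    apply iSup_le
    rintro ⟨s, hs⟩
    by_cases ha : t/(M:ℝ) * s - ω (Real.exp s) ≤ 0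
    · rw [ENNReal.ofReal_eq_zero.mpr ha, mul_zero, zero_add]
      -- ofReal t ≤ ofReal (mL) + m*B via s' = 1
      have h1 := hBge 1 zero_le_one
      have hreal : t ≤ (m:ℝ) * L + (m:ℝ) * (t/(m:ℝ) * 1 - ω (Real.exp 1)) := by
        have e1 : (m:ℝ) * (t/(m:ℝ) * 1) = t := by field_simp
        nlinarith
      calc ENNReal.ofReal t ≤
          ENNReal.ofReal ((m:ℝ) * L + (m:ℝ) * (t/(m:ℝ) * 1 - ω (Real.exp 1))) :=
            ENNReal.ofReal_le_ofReal hreal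
        _ ≤ ENNReal.ofReal ((m:ℝ) * L) +
            ENNReal.ofReal ((m:ℝ) * (t/(m:ℝ) * 1 - ω (Real.exp 1))) :=
            ENNReal.ofReal_add_le
        _ ≤ _ := add_le_add le_rfl h1
    · push_neg at ha
      rw [hcastM, ← ENNReal.ofReal_mul hMpos.le, ← ENNReal.ofReal_add
        (by nlinarith) ht]
      have h1 := hBge (s+1) (by linarith)
      have hreal : (M:ℝ) * (t/(M:ℝ) * s - ω (Real.exp s)) + t ≤
          (m:ℝ) * L + (m:ℝ) * (t/(m:ℝ) * (s+1) - ω (Real.exp (s+1))) := by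
        have e1 : (M:ℝ) * (t/(M:ℝ) * s) = t * s := by field_simp
        have e2 : (m:ℝ) * (t/(m:ℝ) * (s+1)) = t * (s+1) := by field_simp
        have h2 := hstep s hs
        have h3 := hφnn s hs
        nlinarith
      calc ENNReal.ofReal ((M:ℝ) * (t/(M:ℝ) * s - ω (Real.exp s)) + t) ≤
          ENNReal.ofReal ((m:ℝ) * L + (m:ℝ) * (t/(m:ℝ) * (s+1) - ω (Real.exp (s+1)))) :=
            ENNReal.ofReal_le_ofReal hreal
        _ ≤ ENNReal.ofReal ((m:ℝ) * L) +
            ENNReal.ofReal ((m:ℝ) * (t/(m:ℝ) * (s+1) - ω (Real.exp (s+1)))) :=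
            ENNReal.ofReal_add_le
        _ ≤ _ := add_le_add le_rfl h1
  by_cases hfin : ((m:ℕ) : ℝ≥0∞) * phiStar ω (t / (m:ℝ)) = ∞
  · have eB : expE (((m:ℕ) : ℝ≥0∞) * phiStar ω (t / (m:ℝ))) = ⊤ := by
      rw [expE, if_pos hfin]
    rw [eB, ENNReal.mul_top (by
      simp [ENNReal.ofReal_eq_zero, (Real.exp_pos _).not_ge])]
    exact le_top
  · have hRfin : ENNReal.ofReal ((m:ℝ) * L) + ((m:ℕ) : ℝ≥0∞) * phiStar ω (t / (m:ℝ)) ≠ ∞ := by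
      simp [hfin, ENNReal.add_ne_top, ENNReal.mul_eq_top]
    have hAfin : ((M:ℕ) : ℝ≥0∞) * phiStar ω (t / (M:ℝ)) ≠ ∞ :=
      ne_top_of_le_ne_top hRfin (le_trans le_self_add key)
    have eA : expE (((M:ℕ) : ℝ≥0∞) * phiStar ω (t / (M:ℝ))) =
        ENNReal.ofReal (Real.exp ((((M:ℕ) : ℝ≥0∞) * phiStar ω (t / (M:ℝ))).toReal)) := by
      rw [expE, if_neg hAfin]
    have eB : expE (((m:ℕ) : ℝ≥0∞) * phiStar ω (t / (m:ℝ))) =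
        ENNReal.ofReal (Real.exp ((((m:ℕ) : ℝ≥0∞) * phiStar ω (t / (m:ℝ))).toReal)) := by
      rw [expE, if_neg hfin]
    rw [eA, eB]
    have htoReal : (((M:ℕ) : ℝ≥0∞) * phiStar ω (t / (M:ℝ))).toReal + t ≤
        (m:ℝ) * L + (((m:ℕ) : ℝ≥0∞) * phiStar ω (t / (m:ℝ))).toReal := by
      have h := ENNReal.toReal_mono hRfin key
      rw [ENNReal.toReal_add hAfin ENNReal.ofReal_ne_top,
        ENNReal.toReal_add ENNReal.ofReal_ne_top hfin,
        ENNReal.toReal_ofReal ht, ENNReal.toReal_ofReal (by positivity)] at h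
      exact h
    rw [← ENNReal.ofReal_mul (by positivity), ← ENNReal.ofReal_mul (Real.exp_pos _).le]
    apply ENNReal.ofReal_le_ofReal
    have h2t : (2:ℝ) ^ t ≤ Real.exp t := by
      rw [Real.rpow_def_of_pos two_pos]
      apply Real.exp_le_exp.mpr
      have hl : Real.log 2 ≤ 1 := by nlinarith [Real.log_two_lt_d9]
      nlinarith
    calc (2:ℝ) ^ t * Real.exp ((((M:ℕ) : ℝ≥0∞) * phiStar ω (t / (M:ℝ))).toReal) ≤
        Real.exp t * Real.exp ((((M:ℕ) : ℝ≥0∞) * phiStar ω (t / (M:ℝ))).toReal) := by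
          apply mul_le_mul_of_nonneg_right h2t (Real.exp_pos _).le
      _ = Real.exp (t + (((M:ℕ) : ℝ≥0∞) * phiStar ω (t / (M:ℝ))).toReal) := by
          rw [← Real.exp_add]
      _ ≤ Real.exp ((m:ℝ) * L + (((m:ℕ) : ℝ≥0∞) * phiStar ω (t / (m:ℝ))).toReal) := by
          apply Real.exp_le_exp.mpr; linarith
      _ = _ := by rw [Real.exp_add]

end
end
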